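/- arXiv:1111.0689 — 4 statements merged into one kernel-verified Lean document; each statement's English description precedes it below -/
import Mathlib

section
/- Sliding-window subset entropy inequality (Theorem 3): Let L ≥ 2 and let X_1,…,X_L be jointly distributed random variables each taking values in a finite set. Then for every α ∈ {2,…,L}, (1/(α−1)) · ∑_{l=1}^{L} H(X_{W_l^{(α−1)}}) ≥ (1/α) · ∑_{l=1}^{L} H(X_{W_l^{(α)}}). -/
open MeasureTheory ProbabilityTheory

noncomputable def entH {Ω : Type*} [MeasurableSpace Ω] (μ : Measure Ω)
    {S : Type*} [Fintype S] (X : Ω → S) : ℝ :=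
  ∑ s : S, Real.negMulLog ((μ (X ⁻¹' {s})).toReal)

noncomputable def condEntH {Ω : Type*} [MeasurableSpace Ω] (μ : Measure Ω)
    {S T : Type*} [Fintype S] [Fintype T] (X : Ω → S) (Y : Ω → T) : ℝ :=
  entH μ (fun ω => (X ω, Y ω)) - entH μ Y

def jointOn {Ω : Type*} {ι : Type*} {S : ι → Type*} (X : ∀ i, Ω → S i) (U : Finset ι) :
    Ω → ((i : U) → S i) := fun ω i => X i ω

noncomputable def entHset {Ω : Type*} [MeasurableSpace Ω] (μ : Measure Ω)
    {ι : Type*} [DecidableEq ι] {S : ι → Type*} [∀ i, Fintype (S i)]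
    (X : ∀ i, Ω → S i) (U : Finset ι) : ℝ :=
  entH μ (jointOn X U)

noncomputable def condEntHset {Ω : Type*} [MeasurableSpace Ω] (μ : Measure Ω)
    {ι : Type*} [DecidableEq ι] {S : ι → Type*} [∀ i, Fintype (S i)]
    (X : ∀ i, Ω → S i) (U A : Finset ι) : ℝ :=
  condEntH μ (jointOn X U) (jointOn X A)

/-- The sliding window `W_l^{(α)}` (0-indexed: `{⟨l+k⟩ : k < α}` with indices mod `L`). -/
def win (L : ℕ) (l : Fin L) (α : ℕ) : Finset (Fin L) :=
  (Finset.range α).image (fun k => (⟨((l : ℕ) + k) % L, Nat.mod_lt _ l.pos⟩ : Fin L))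

/-! ### Discrete entropy of a pushforward distribution -/

section Discrete

variable {P : Type*} [Fintype P]

open Classical in
/-- Entropy of the pushforward of the mass function `p` under `f`. -/
noncomputable def margH (p : P → ℝ) {T : Type*} [Fintype T] (f : P → T) : ℝ :=
  ∑ t, Real.negMulLog (∑ x ∈ Finset.univ.filter (fun x => f x = t), p x)

lemma margH_comp_inj (p : P → ℝ) {T U : Type*} [Fintype T] [Fintype U]
    (f : P → T) (φ : T → U) (hφ : Function.Injective φ) :
    margH p (fun x => φ (f x)) = margH p f := by
  classical
  unfold margH
  rw [← Finset.sum_subset (Finset.subset_univ ((Finset.univ : Finset T).image φ))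
    (fun u _ hu => ?_)]
  · rw [Finset.sum_image (fun a _ b _ h => hφ h)]
    refine Finset.sum_congr rfl fun t _ => ?_
    congr 1
    refine Finset.sum_congr (Finset.filter_congr fun x _ => ?_) fun _ _ => rfl
    simp [hφ.eq_iff]
  · have : Finset.univ.filter (fun x => φ (f x) = u) = ∅ := by
      rw [Finset.filter_eq_empty_iff]
      intro x _ h
      exact hu (Finset.mem_image.2 ⟨f x, Finset.mem_univ _, h⟩)
    simp [this]

/-- Pure Gibbs-type submodularity for a nonnegative array. -/
lemma gibbs_submod {A B C : Type*} [Fintype A] [Fintype B] [Fintype C]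
    (q : A → B → C → ℝ) (hq : ∀ a b c, 0 ≤ q a b c) :
    (∑ a, ∑ b, ∑ c, Real.negMulLog (q a b c)) +
      ∑ b, Real.negMulLog (∑ a, ∑ c, q a b c) ≤
    (∑ a, ∑ b, Real.negMulLog (∑ c, q a b c)) +
      ∑ b, ∑ c, Real.negMulLog (∑ a, q a b c) := by
  classical
  set qAB : A → B → ℝ := fun a b => ∑ c, q a b c with hqAB
  set qBC : B → C → ℝ := fun b c => ∑ a, q a b c with hqBC
  set qB : B → ℝ := fun b => ∑ a, ∑ c, q a b c with hqB
  have hqABn : ∀ a b, 0 ≤ qAB a b := fun a b => Finset.sum_nonneg fun _ _ => hq _ _ _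
  have hqBCn : ∀ b c, 0 ≤ qBC b c := fun b c => Finset.sum_nonneg fun _ _ => hq _ _ _
  have hqBn : ∀ b, 0 ≤ qB b := fun b => Finset.sum_nonneg fun _ _ => hqABn _ _
  -- pointwise positivity facts
  have hle1 : ∀ a b c, q a b c ≤ qAB a b := fun a b c =>
    Finset.single_le_sum (fun c _ => hq a b c) (Finset.mem_univ c)
  have hle2 : ∀ a b c, q a b c ≤ qBC b c := fun a b c =>
    Finset.single_le_sum (fun a _ => hq a b c) (Finset.mem_univ a)
  have hle3 : ∀ a b, qAB a b ≤ qB b := fun a b =>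
    Finset.single_le_sum (fun a _ => hqABn a b) (Finset.mem_univ a)
  -- the u function
  set u : A → B → C → ℝ := fun a b c => if qB b = 0 then 0 else qAB a b * qBC b c / qB b with hu
  have hun : ∀ a b c, 0 ≤ u a b c := by
    intro a b c
    simp only [hu]
    split
    · exact le_refl 0
    · exact div_nonneg (mul_nonneg (hqABn _ _) (hqBCn _ _)) (hqBn _)
  -- key pointwise inequality
  have key : ∀ a b c,
      q a b c * Real.log (qAB a b) + q a b c * Real.log (qBC b c)
        - q a b c * Real.log (qB b) - q a b c * Real.log (q a b c)
      ≤ u a b c - q a b c := by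
    intro a b c
    rcases eq_or_lt_of_le (hq a b c) with h0 | hpos
    · rw [← h0]
      simpa using hun a b c
    · have hAB : 0 < qAB a b := lt_of_lt_of_le hpos (hle1 a b c)
      have hBC : 0 < qBC b c := lt_of_lt_of_le hpos (hle2 a b c)
      have hB : 0 < qB b := lt_of_lt_of_le hAB (hle3 a b)
      have hu' : u a b c = qAB a b * qBC b c / qB b := by
        simp [hu, hB.ne']
      have harg : 0 < qAB a b * qBC b c / (qB b * q a b c) := by positivity
      have hlog : Real.log (qAB a b * qBC b c / (qB b * q a b c))
          = Real.log (qAB a b) + Real.log (qBC b c) - (Real.log (qB b) + Real.log (q a b c)) := by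
        rw [Real.log_div (by positivity) (by positivity), Real.log_mul hAB.ne' hBC.ne',
          Real.log_mul hB.ne' hpos.ne']
      have := Real.log_le_sub_one_of_pos harg
      have h2 : q a b c * Real.log (qAB a b * qBC b c / (qB b * q a b c))
          ≤ q a b c * (qAB a b * qBC b c / (qB b * q a b c) - 1) :=
        mul_le_mul_of_nonneg_left this (le_of_lt hpos)
      rw [hlog] at h2
      have h3 : q a b c * (qAB a b * qBC b c / (qB b * q a b c) - 1)
          = u a b c - q a b c := by
        rw [hu']
        field_simp
      nlinarith [h2, h3]
  -- sum of u over a,c equals qB b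
  have husum : ∀ b, ∑ a, ∑ c, u a b c = qB b := by
    intro b
    rcases eq_or_ne (qB b) 0 with h | h
    · simp [hu, h]
    · simp only [hu, if_neg h]
      have : ∑ a, ∑ c, qAB a b * qBC b c / qB b
          = (∑ a, qAB a b) * (∑ c, qBC b c) / qB b := by
        rw [Finset.sum_mul_sum, Finset.sum_div]
        exact Finset.sum_congr rfl fun a _ => by rw [Finset.sum_div]
      rw [this]
      have h1 : ∑ a, qAB a b = qB b := rfl
      have h2 : ∑ c, qBC b c = qB b := Finset.sum_comm
      rw [h1, h2]
      field_simp
  -- total sums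
  have hqtot : ∑ b, qB b = ∑ a, ∑ b, ∑ c, q a b c := by
    rw [Finset.sum_comm]
  -- Sum the key inequality
  have KEY : ∑ a, ∑ b, ∑ c,
      (q a b c * Real.log (qAB a b) + q a b c * Real.log (qBC b c)
        - q a b c * Real.log (qB b) - q a b c * Real.log (q a b c)) ≤ 0 := by
    have step : ∑ a, ∑ b, ∑ c,
        (q a b c * Real.log (qAB a b) + q a b c * Real.log (qBC b c)
          - q a b c * Real.log (qB b) - q a b c * Real.log (q a b c))
        ≤ ∑ a, ∑ b, ∑ c, (u a b c - q a b c) := by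
      refine Finset.sum_le_sum fun a _ => Finset.sum_le_sum fun b _ => Finset.sum_le_sum fun c _ => key a b c
    refine step.trans ?_
    have : ∑ a, ∑ b, ∑ c, (u a b c - q a b c)
        = (∑ a, ∑ b, ∑ c, u a b c) - ∑ a, ∑ b, ∑ c, q a b c := by
      simp [Finset.sum_sub_distrib]
    rw [this]
    have : ∑ a, ∑ b, ∑ c, u a b c = ∑ b, qB b := by
      rw [Finset.sum_comm]
      exact Finset.sum_congr rfl fun b _ => husum b
    rw [this, hqtot, sub_self]
  -- now rearrange the goal
  -- abbreviations for the four triple sums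
  set Tq : ℝ := ∑ a, ∑ b, ∑ c, q a b c * Real.log (q a b c) with hTq
  set TAB : ℝ := ∑ a, ∑ b, ∑ c, q a b c * Real.log (qAB a b) with hTAB
  set TBC : ℝ := ∑ a, ∑ b, ∑ c, q a b c * Real.log (qBC b c) with hTBC
  set TB : ℝ := ∑ a, ∑ b, ∑ c, q a b c * Real.log (qB b) with hTB
  have KEY' : TAB + TBC - TB - Tq ≤ 0 := by
    have : ∑ a, ∑ b, ∑ c,
        (q a b c * Real.log (qAB a b) + q a b c * Real.log (qBC b c)
          - q a b c * Real.log (qB b) - q a b c * Real.log (q a b c))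
        = TAB + TBC - TB - Tq := by
      simp [hTq, hTAB, hTBC, hTB, Finset.sum_add_distrib, Finset.sum_sub_distrib]
    linarith [KEY, this.symm.trans_le KEY]
  have eX : ∑ a, ∑ b, ∑ c, Real.negMulLog (q a b c) = -Tq := by
    simp [Real.negMulLog_eq_neg, hTq, Finset.sum_neg_distrib]
  have eZ : ∑ a, ∑ b, Real.negMulLog (qAB a b) = -TAB := by
    rw [hTAB]
    rw [← Finset.sum_neg_distrib]
    refine Finset.sum_congr rfl fun a _ => ?_
    rw [← Finset.sum_neg_distrib]
    refine Finset.sum_congr rfl fun b _ => ?_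
    simp only [Real.negMulLog_eq_neg, Finset.sum_neg_distrib, ← Finset.sum_mul]
    rfl
  have eY : ∑ b, Real.negMulLog (qB b) = -TB := by
    rw [hTB]
    have swap : ∑ a, ∑ b, ∑ c, q a b c * Real.log (qB b)
        = ∑ b, ∑ a, ∑ c, q a b c * Real.log (qB b) := Finset.sum_comm
    rw [swap, ← Finset.sum_neg_distrib]
    refine Finset.sum_congr rfl fun b _ => ?_
    simp only [Real.negMulLog_eq_neg, Finset.sum_neg_distrib, ← Finset.sum_mul]
    rfl
  have eW : ∑ b, ∑ c, Real.negMulLog (qBC b c) = -TBC := by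
    rw [hTBC]
    have swap : ∑ a, ∑ b, ∑ c, q a b c * Real.log (qBC b c)
        = ∑ b, ∑ c, ∑ a, q a b c * Real.log (qBC b c) := by
      rw [Finset.sum_comm]
      exact Finset.sum_congr rfl fun b _ => Finset.sum_comm
    rw [swap, ← Finset.sum_neg_distrib]
    refine Finset.sum_congr rfl fun b _ => ?_
    rw [← Finset.sum_neg_distrib]
    refine Finset.sum_congr rfl fun c _ => ?_
    simp only [Real.negMulLog_eq_neg, Finset.sum_neg_distrib, ← Finset.sum_mul]
    rfl
  rw [eX, eY, eZ, eW]
  linarith [KEY']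

/-- Submodularity of entropy. -/
lemma margH_submod (p : P → ℝ) (hp : ∀ x, 0 ≤ p x) {A B C : Type*}
    [Fintype A] [Fintype B] [Fintype C] (f : P → A) (g : P → B) (h : P → C) :
    margH p (fun x => ((f x, g x), h x)) + margH p g ≤
      margH p (fun x => (f x, g x)) + margH p (fun x => (g x, h x)) := by
  classical
  set q : A → B → C → ℝ :=
    fun a b c => ∑ x ∈ Finset.univ.filter (fun x => f x = a ∧ g x = b ∧ h x = c), p x with hq
  have hqn : ∀ a b c, 0 ≤ q a b c := fun a b c => Finset.sum_nonneg fun x _ => hp x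
  have e1 : margH p (fun x => ((f x, g x), h x)) = ∑ a, ∑ b, ∑ c, Real.negMulLog (q a b c) := by
    unfold margH
    rw [Fintype.sum_prod_type, Fintype.sum_prod_type]
    refine Finset.sum_congr rfl fun a _ => Finset.sum_congr rfl fun b _ =>
      Finset.sum_congr rfl fun c _ => ?_
    congr 1
    refine Finset.sum_congr ?_ fun _ _ => rfl
    ext x
    simp only [Finset.mem_filter, Finset.mem_univ, true_and, Prod.mk.injEq, and_assoc]
  have e2 : margH p g = ∑ b, Real.negMulLog (∑ a, ∑ c, q a b c) := by
    unfold margH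
    refine Finset.sum_congr rfl fun b _ => ?_
    congr 1
    refine Eq.trans (Finset.sum_fiberwise _ (fun x => (f x, h x)) p).symm ?_
    rw [Fintype.sum_prod_type]
    refine Finset.sum_congr rfl fun a _ => Finset.sum_congr rfl fun c _ => ?_
    refine Finset.sum_congr ?_ fun _ _ => rfl
    ext x
    simp only [Finset.mem_filter, Finset.mem_univ, true_and, Prod.mk.injEq]
    tauto
  have e3 : margH p (fun x => (f x, g x)) = ∑ a, ∑ b, Real.negMulLog (∑ c, q a b c) := by
    unfold margH
    rw [Fintype.sum_prod_type]
    refine Finset.sum_congr rfl fun a _ => Finset.sum_congr rfl fun b _ => ?_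
    congr 1
    refine Eq.trans (Finset.sum_fiberwise _ h p).symm ?_
    refine Finset.sum_congr rfl fun c _ => ?_
    refine Finset.sum_congr ?_ fun _ _ => rfl
    ext x
    simp only [Finset.mem_filter, Finset.mem_univ, true_and, Prod.mk.injEq]
    tauto
  have e4 : margH p (fun x => (g x, h x)) = ∑ b, ∑ c, Real.negMulLog (∑ a, q a b c) := by
    unfold margH
    rw [Fintype.sum_prod_type]
    refine Finset.sum_congr rfl fun b _ => Finset.sum_congr rfl fun c _ => ?_
    congr 1
    refine Eq.trans (Finset.sum_fiberwise _ f p).symm ?_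
    refine Finset.sum_congr rfl fun a _ => ?_
    refine Finset.sum_congr ?_ fun _ _ => rfl
    ext x
    simp only [Finset.mem_filter, Finset.mem_univ, true_and, Prod.mk.injEq]
    tauto
  rw [e1, e2, e3, e4]
  exact gibbs_submod q hqn

end Discrete

/-! ### Set-indexed entropy -/

section SetLevel

variable {ι : Type*} [Fintype ι] [DecidableEq ι] {S : ι → Type*} [∀ i, Fintype (S i)]

@[reducible] def restr (U : Finset ι) : (∀ i, S i) → ((i : U) → S i) := fun x i => x i

noncomputable def H2 (p : (∀ i, S i) → ℝ) (U : Finset ι) : ℝ := margH p (restr U)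

lemma H2_empty (p : (∀ i, S i) → ℝ) (hp1 : ∑ x, p x = 1) : H2 p (∅ : Finset ι) = 0 := by
  classical
  haveI : Subsingleton ((i : (∅ : Finset ι)) → S i) :=
    ⟨fun a b => funext fun i => absurd i.2 (Finset.notMem_empty i.1)⟩
  have hd : ((i : (∅ : Finset ι)) → S i) := fun i => absurd i.2 (Finset.notMem_empty i.1)
  unfold H2 margH
  rw [Fintype.sum_subsingleton _ hd]
  refine Eq.trans (congrArg Real.negMulLog ?_) Real.negMulLog_one
  rw [← hp1]
  refine Finset.sum_congr ?_ fun _ _ => rfl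
  ext x
  simp only [Finset.mem_filter, Finset.mem_univ, true_and, iff_true]
  exact Subsingleton.elim _ _

set_option maxHeartbeats 1000000 in
lemma H2_cond_mono (p : (∀ i, S i) → ℝ) (hp : ∀ x, 0 ≤ p x) (c : ι) {U V : Finset ι}
    (hUV : U ⊆ V) :
    H2 p (insert c V) - H2 p V ≤ H2 p (insert c U) - H2 p U := by
  classical
  have SM := margH_submod p hp (fun x => x c) (restr U) (restr (V \ U))
  have h1 : margH p (fun x => ((x c, restr U x), restr (V \ U) x)) = H2 p (insert c V) := by
    set φ : ((i : (insert c V : Finset ι)) → S i) →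
        ((S c × ((i : U) → S i)) × ((i : (V \ U : Finset ι)) → S i)) :=
      fun y =>
        ((y ⟨c, Finset.mem_insert_self c V⟩,
          fun i : U => y ⟨i.1, Finset.mem_insert_of_mem (hUV i.2)⟩),
         fun i : (V \ U : Finset ι) => y ⟨i.1, Finset.mem_insert_of_mem (Finset.mem_sdiff.1 i.2).1⟩)
      with hφdef
    have hφ : Function.Injective φ := by
      intro y₁ y₂ hy
      funext ⟨i, hi⟩
      rcases Finset.mem_insert.1 hi with rfl | hiV
      · exact congrArg (fun z => z.1.1) hy
      · by_cases hiU : i ∈ U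
        · exact congrFun (congrArg (fun z => z.1.2) hy) ⟨i, hiU⟩
        · exact congrFun (congrArg Prod.snd hy) ⟨i, Finset.mem_sdiff.2 ⟨hiV, hiU⟩⟩
    have hcomp : ∀ x, φ (restr (insert c V) x) = ((x c, restr U x), restr (V \ U) x) :=
      fun _ => rfl
    have h := margH_comp_inj p (restr (insert c V)) φ hφ
    rw [funext fun x => (hcomp x).symm]
    exact h
  have h3 : margH p (fun x => (restr U x, restr (V \ U) x)) = H2 p V := by
    set φ : ((i : (V : Finset ι)) → S i) →
        (((i : U) → S i) × ((i : (V \ U : Finset ι)) → S i)) :=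
      fun y =>
        ((fun i : U => y ⟨i.1, hUV i.2⟩),
         fun i : (V \ U : Finset ι) => y ⟨i.1, (Finset.mem_sdiff.1 i.2).1⟩) with hφdef
    have hφ : Function.Injective φ := by
      intro y₁ y₂ hy
      funext ⟨i, hi⟩
      by_cases hiU : i ∈ U
      · exact congrFun (congrArg Prod.fst hy) ⟨i, hiU⟩
      · exact congrFun (congrArg Prod.snd hy) ⟨i, Finset.mem_sdiff.2 ⟨hi, hiU⟩⟩
    have hcomp : ∀ x, φ (restr V x) = (restr U x, restr (V \ U) x) := fun _ => rfl
    have h := margH_comp_inj p (restr V) φ hφ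
    rw [funext fun x => (hcomp x).symm]
    exact h
  have h4 : margH p (fun x => (x c, restr U x)) = H2 p (insert c U) := by
    set φ : ((i : (insert c U : Finset ι)) → S i) → (S c × ((i : U) → S i)) :=
      fun y =>
        (y ⟨c, Finset.mem_insert_self c U⟩,
         fun i : U => y ⟨i.1, Finset.mem_insert_of_mem i.2⟩) with hφdef
    have hφ : Function.Injective φ := by
      intro y₁ y₂ hy
      funext ⟨i, hi⟩
      rcases Finset.mem_insert.1 hi with rfl | hiU
      · exact congrArg Prod.fst hy
      · exact congrFun (congrArg Prod.snd hy) ⟨i, hiU⟩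
    have hcomp : ∀ x, φ (restr (insert c U) x) = (x c, restr U x) := fun _ => rfl
    have h := margH_comp_inj p (restr (insert c U)) φ hφ
    rw [funext fun x => (hcomp x).symm]
    exact h
  have h2 : margH p (restr U) = H2 p U := rfl
  rw [h1, h3, h4, h2] at SM
  linarith

end SetLevel

/-! ### Bridge from measure theory to the discrete picture -/

section Bridge

variable {Ω : Type*} [MeasurableSpace Ω] (μ : Measure Ω) [IsProbabilityMeasure μ]
variable {P : Type*} [Fintype P] (J : Ω → P)

lemma mass_fiber (hJ : ∀ x : P, MeasurableSet (J ⁻¹' {x})) {T : Type*} [Fintype T]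
    (f : P → T) (t : T) [DecidablePred fun x => f x = t] :
    (μ ((fun ω => f (J ω)) ⁻¹' {t})).toReal
      = ∑ x ∈ Finset.univ.filter (fun x => f x = t), (μ (J ⁻¹' {x})).toReal := by
  classical
  have hset : (fun ω => f (J ω)) ⁻¹' {t}
      = ⋃ x ∈ (Finset.univ.filter (fun x => f x = t) : Finset P), J ⁻¹' {x} := by
    ext ω
    simp only [Set.mem_preimage, Set.mem_singleton_iff, Set.mem_iUnion, Finset.mem_coe,
      Finset.mem_filter, Finset.mem_univ, true_and]
    constructor
    · intro h; exact ⟨J ω, h, rfl⟩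
    · rintro ⟨x, hx, hJx⟩; rw [hJx]; exact hx
  rw [hset, measure_biUnion_finset ?_ ?_]
  · rw [ENNReal.toReal_sum]
    intro x _
    exact measure_ne_top μ _
  · intro x _ y _ hxy
    refine Set.disjoint_left.2 fun ω h1 h2 => ?_
    exact hxy (h1.symm.trans h2)
  · intro x _
    exact hJ x

lemma entH_eq_margH (hJ : ∀ x : P, MeasurableSet (J ⁻¹' {x})) {T : Type*} [Fintype T]
    (f : P → T) :
    entH μ (fun ω => f (J ω)) = margH (fun x => (μ (J ⁻¹' {x})).toReal) f := by
  classical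
  unfold entH margH
  refine Finset.sum_congr rfl fun t _ => ?_
  rw [mass_fiber μ J hJ f t]

lemma mass_total (hJ : ∀ x : P, MeasurableSet (J ⁻¹' {x})) :
    ∑ x, (μ (J ⁻¹' {x})).toReal = 1 := by
  classical
  have h := mass_fiber μ J hJ (fun _ => (0 : Fin 1)) 0
  have hs : ((fun _ : Ω => (0 : Fin 1)) ⁻¹' {(0 : Fin 1)}) = Set.univ := by
    ext ω; simp
  rw [hs] at h
  simp only [measure_univ, ENNReal.toReal_one,
    Finset.filter_true_of_mem (fun _ _ => trivial)] at h
  exact h.symm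

end Bridge

/-! ### Window lemmas -/

def wm (L : ℕ) (l : Fin L) (j : ℕ) : Fin L := ⟨((l : ℕ) + j) % L, Nat.mod_lt _ l.pos⟩

def rot (L : ℕ) : Fin L → Fin L := fun l => ⟨((l : ℕ) + 1) % L, Nat.mod_lt _ l.pos⟩

lemma mod_succ_aux {L : ℕ} (m : Fin L) :
    ((m : ℕ) + 1) % L = if (m : ℕ) + 1 = L then 0 else (m : ℕ) + 1 := by
  by_cases h : (m : ℕ) + 1 = L
  · rw [if_pos h, h, Nat.mod_self]
  · rw [if_neg h]
    exact Nat.mod_eq_of_lt (lt_of_le_of_ne m.isLt h)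

lemma rot_bij (L : ℕ) : Function.Bijective (rot L) := by
  refine Finite.injective_iff_bijective.1 fun a b hab => ?_
  have h1 := mod_succ_aux a
  have h2 := mod_succ_aux b
  have hv : ((a : ℕ) + 1) % L = ((b : ℕ) + 1) % L := congrArg Fin.val hab
  have ha := a.isLt
  have hb := b.isLt
  apply Fin.ext
  rw [h1, h2] at hv
  split at hv <;> split at hv <;> omega

lemma win_zero (L : ℕ) (l : Fin L) : win L l 0 = ∅ := by
  simp [win]

lemma win_succ (L : ℕ) (l : Fin L) (j : ℕ) :
    win L l (j + 1) = insert (wm L l j) (win L l j) := by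
  unfold win
  rw [Finset.range_add_one, Finset.image_insert]
  rfl

lemma wm_rot (L : ℕ) (l : Fin L) (j : ℕ) : wm L l (j + 1) = wm L (rot L l) j := by
  apply Fin.ext
  show ((l : ℕ) + (j + 1)) % L = (((l : ℕ) + 1) % L + j) % L
  rw [Nat.mod_add_mod]
  congr 1
  omega

lemma win_rot_subset (L : ℕ) (l : Fin L) (j : ℕ) : win L (rot L l) j ⊆ win L l (j + 1) := by
  intro x hx
  obtain ⟨k, hk, rfl⟩ := Finset.mem_image.1 hx
  have hk' := Finset.mem_range.1 hk
  refine Finset.mem_image.2 ⟨k + 1, Finset.mem_range.2 (by omega), ?_⟩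
  apply Fin.ext
  show ((l : ℕ) + (k + 1)) % L = (((l : ℕ) + 1) % L + k) % L
  rw [Nat.mod_add_mod]
  congr 1
  omega

/-- **Sliding-window subset entropy inequality** (Theorem 3). -/
theorem sliding_window_subset_entropy_inequality
    {Ω : Type*} [MeasurableSpace Ω] (μ : Measure Ω) [IsProbabilityMeasure μ]
    {L : ℕ} (hL : 2 ≤ L) {S : Fin L → Type*} [∀ l, Fintype (S l)]
    [∀ l, MeasurableSpace (S l)] [∀ l, MeasurableSingletonClass (S l)]
    (X : ∀ l, Ω → S l) (hX : ∀ l, Measurable (X l))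
    (α : ℕ) (hα1 : 2 ≤ α) (hα2 : α ≤ L) :
    (1 / ((α : ℝ) - 1)) * ∑ l : Fin L, entHset μ X (win L l (α - 1)) ≥
      (1 / (α : ℝ)) * ∑ l : Fin L, entHset μ X (win L l α) := by
  classical
  set J : Ω → (∀ l, S l) := fun ω l => X l ω with hJdef
  have hJ : ∀ x : (∀ l, S l), MeasurableSet (J ⁻¹' {x}) := by
    intro x
    have : J ⁻¹' {x} = ⋂ l, X l ⁻¹' {x l} := by
      ext ω
      simp [hJdef, funext_iff]
    rw [this]
    exact MeasurableSet.iInter fun l => hX l (measurableSet_singleton _)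
  set p : (∀ l, S l) → ℝ := fun x => (μ (J ⁻¹' {x})).toReal with hpdef
  have hp : ∀ x, 0 ≤ p x := fun _ => ENNReal.toReal_nonneg
  have hp1 : ∑ x, p x = 1 := mass_total μ J hJ
  have hent : ∀ U : Finset (Fin L), entHset μ X U = H2 p U := by
    intro U
    exact entH_eq_margH μ J hJ (restr U)
  -- the conditional entropy increments
  set a : ℕ → ℝ :=
    fun j => ∑ l : Fin L, (H2 p (insert (wm L l j) (win L l j)) - H2 p (win L l j)) with hadef
  have hsum : ∀ n, ∑ l : Fin L, H2 p (win L l n) = ∑ j ∈ Finset.range n, a j := by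
    intro n
    induction n with
    | zero => simp [win_zero, H2_empty p hp1]
    | succ n ih =>
      rw [Finset.sum_range_succ, ← ih, hadef, ← Finset.sum_add_distrib]
      refine Finset.sum_congr rfl fun l _ => ?_
      rw [win_succ]
      ring
  have amono : ∀ j, a (j + 1) ≤ a j := by
    intro j
    have step : ∀ l : Fin L,
        H2 p (insert (wm L l (j + 1)) (win L l (j + 1))) - H2 p (win L l (j + 1))
          ≤ H2 p (insert (wm L (rot L l) j) (win L (rot L l) j)) - H2 p (win L (rot L l) j) := by
      intro l
      rw [wm_rot L l j]
      exact H2_cond_mono p hp (wm L (rot L l) j) (win_rot_subset L l j)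
    calc a (j + 1)
        ≤ ∑ l : Fin L, (H2 p (insert (wm L (rot L l) j) (win L (rot L l) j))
            - H2 p (win L (rot L l) j)) := Finset.sum_le_sum fun l _ => step l
      _ = a j := Function.Bijective.sum_comp (rot_bij L)
          (fun l => H2 p (insert (wm L l j) (win L l j)) - H2 p (win L l j))
  have anti : ∀ m n, m ≤ n → a n ≤ a m := by
    intro m n h
    induction h with
    | refl => exact le_rfl
    | step h ih => exact le_trans (amono _) ih
  -- final arithmetic
  set β := α - 1 with hβdef
  have hβ : α = β + 1 := by omega
  have hβ1 : 1 ≤ β := by omega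
  rw [Finset.sum_congr rfl fun l _ => hent (win L l β),
    Finset.sum_congr rfl fun l _ => hent (win L l α), hsum β, hsum α]
  set Hm : ℝ := ∑ j ∈ Finset.range β, a j with hHm
  have hsplit : ∑ j ∈ Finset.range α, a j = Hm + a β := by
    rw [hβ, Finset.sum_range_succ]
  rw [hsplit]
  have hbound : (β : ℝ) * a β ≤ Hm := by
    calc (β : ℝ) * a β = ∑ _j ∈ Finset.range β, a β := by
          rw [Finset.sum_const, Finset.card_range, nsmul_eq_mul]
      _ ≤ Hm := Finset.sum_le_sum fun j hj => anti j β (le_of_lt (Finset.mem_range.1 hj))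
  have hcast : ((α : ℝ) - 1) = (β : ℝ) := by
    rw [hβ]
    push_cast
    ring
  rw [hcast, ge_iff_le]
  have hβpos : (0 : ℝ) < β := by exact_mod_cast hβ1
  have hαpos : (0 : ℝ) < α := by positivity
  rw [one_div_mul_eq_div, one_div_mul_eq_div, div_le_div_iff₀ hαpos hβpos]
  have hαcast : (α : ℝ) = (β : ℝ) + 1 := by rw [hβ]; push_cast; ring
  rw [hαcast]
  nlinarith [hbound]
end

section
/- Han's subset entropy inequality (Theorem 1): Let L ≥ 2 and let X_1,…,X_L be jointly distributed random variables each taking values in a finite set. Then for every α ∈ {2,…,L}, (1/C(L,α−1)) · ∑_{V ∈ Ω_L^{(α−1)}} H(X_V)/(α−1) ≥ (1/C(L,α)) · ∑_{U ∈ Ω_L^{(α)}} H(X_U)/α, where C(L,k) is the binomial coefficient. -/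
open MeasureTheory ProbabilityTheory

open scoped ENNReal

lemma han_gibbs {ι : Type*} [Fintype ι] (w y : ι → ℝ) (hw : ∀ i, 0 ≤ w i) (hy : ∀ i, 0 ≤ y i)
    (h0 : ∀ i, w i ≠ 0 → y i ≠ 0) (hsum : ∑ i, y i ≤ ∑ i, w i) :
    ∑ i, w i * Real.log (y i / w i) ≤ 0 := by
  have key : ∀ i, w i * Real.log (y i / w i) ≤ y i - w i := by
    intro i
    rcases eq_or_lt_of_le (hw i) with h | h
    · simpa [← h] using hy i
    · have hyi : 0 < y i := lt_of_le_of_ne (hy i) (Ne.symm (h0 i (ne_of_gt h)))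
      have hlog := Real.log_le_sub_one_of_pos (div_pos hyi h)
      have : w i * Real.log (y i / w i) ≤ w i * (y i / w i - 1) := by
        exact mul_le_mul_of_nonneg_left hlog (le_of_lt h)
      calc w i * Real.log (y i / w i) ≤ w i * (y i / w i - 1) := this
        _ = y i - w i := by field_simp
  calc ∑ i, w i * Real.log (y i / w i) ≤ ∑ i, (y i - w i) := Finset.sum_le_sum fun i _ => key i
    _ = ∑ i, y i - ∑ i, w i := Finset.sum_sub_distrib _ _
    _ ≤ 0 := by linarith

lemma han_negMulLog_sum_expand {ι : Type*} [Fintype ι] (f : ι → ℝ) :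
    Real.negMulLog (∑ i, f i) = ∑ i, -(f i * Real.log (∑ i, f i)) := by
  simp [Real.negMulLog, Finset.sum_mul]

set_option maxHeartbeats 1000000 in
lemma han_pure_submod {A B C : Type*} [Fintype A] [Fintype B] [Fintype C]
    (p : A × B × C → ℝ) (hp : ∀ t, 0 ≤ p t) (hsum : ∑ t, p t = 1) :
    (∑ t, Real.negMulLog (p t)) + ∑ c, Real.negMulLog (∑ a, ∑ b, p (a, b, c)) ≤
      (∑ x : A × C, Real.negMulLog (∑ b, p (x.1, b, x.2))) +
        ∑ x : B × C, Real.negMulLog (∑ a, p (a, x.1, x.2)) := by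
  have tri : ∀ f : A × B × C → ℝ, ∑ t, f t = ∑ a, ∑ b, ∑ c, f (a, b, c) := by
    intro f
    rw [Fintype.sum_prod_type]
    exact Finset.sum_congr rfl fun a _ => Fintype.sum_prod_type _
  set pac : A → C → ℝ := fun a c => ∑ b, p (a, b, c) with hpac
  set pbc : B → C → ℝ := fun b c => ∑ a, p (a, b, c) with hpbc
  set pc : C → ℝ := fun c => ∑ a, ∑ b, p (a, b, c) with hpc
  set q : A × B × C → ℝ := fun t => pac t.1 t.2.2 * pbc t.2.1 t.2.2 / pc t.2.2 with hq
  have hpac0 : ∀ a c, 0 ≤ pac a c := fun a c => Finset.sum_nonneg fun b _ => hp _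
  have hpbc0 : ∀ b c, 0 ≤ pbc b c := fun b c => Finset.sum_nonneg fun a _ => hp _
  have hpc0 : ∀ c, 0 ≤ pc c := fun c => Finset.sum_nonneg fun a _ => hpac0 a c
  have hle_ac : ∀ t : A × B × C, p t ≤ pac t.1 t.2.2 := by
    rintro ⟨a, b, c⟩
    exact Finset.single_le_sum (f := fun b => p (a, b, c)) (fun b _ => hp _) (Finset.mem_univ b)
  have hle_bc : ∀ t : A × B × C, p t ≤ pbc t.2.1 t.2.2 := by
    rintro ⟨a, b, c⟩
    exact Finset.single_le_sum (f := fun a => p (a, b, c)) (fun a _ => hp _) (Finset.mem_univ a)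
  have hle_c : ∀ t : A × B × C, p t ≤ pc t.2.2 := by
    rintro ⟨a, b, c⟩
    exact le_trans (hle_ac ⟨a, b, c⟩)
      (Finset.single_le_sum (f := fun a => pac a c) (fun a _ => hpac0 a c) (Finset.mem_univ a))
  have hq0 : ∀ t, 0 ≤ q t := fun t =>
    div_nonneg (mul_nonneg (hpac0 _ _) (hpbc0 _ _)) (hpc0 _)
  have hqne : ∀ t, p t ≠ 0 → q t ≠ 0 := by
    intro t hpt
    have h1 : 0 < p t := lt_of_le_of_ne (hp t) (Ne.symm hpt)
    exact ne_of_gt (div_pos (mul_pos (lt_of_lt_of_le h1 (hle_ac t))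
      (lt_of_lt_of_le h1 (hle_bc t))) (lt_of_lt_of_le h1 (hle_c t)))
  have hmargA : ∀ c, ∑ a, pac a c = pc c := fun c => rfl
  have hmargB : ∀ c, ∑ b, pbc b c = pc c := fun c => Finset.sum_comm
  have hqsum : ∑ t, q t ≤ ∑ t, p t := by
    rw [hsum, tri q]
    have swap : ∑ a, ∑ b, ∑ c, q (a, b, c) = ∑ c, ∑ a, ∑ b, q (a, b, c) :=
      calc ∑ a, ∑ b, ∑ c, q (a, b, c) = ∑ a, ∑ c, ∑ b, q (a, b, c) :=
            Finset.sum_congr rfl fun a _ => Finset.sum_comm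
        _ = ∑ c, ∑ a, ∑ b, q (a, b, c) := Finset.sum_comm
    rw [swap]
    have inner : ∀ c, ∑ a, ∑ b, q (a, b, c) = pc c * pc c / pc c := by
      intro c
      have expand : (∑ a, pac a c) * (∑ b, pbc b c) / pc c
          = ∑ a, ∑ b, pac a c * pbc b c / pc c := by
        rw [Finset.sum_mul, Finset.sum_div]
        refine Finset.sum_congr rfl fun a _ => ?_
        rw [Finset.mul_sum, Finset.sum_div]
      have qdef : ∀ a b, q (a, b, c) = pac a c * pbc b c / pc c := fun _ _ => rfl
      calc ∑ a, ∑ b, q (a, b, c) = ∑ a, ∑ b, pac a c * pbc b c / pc c := by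
            simp only [qdef]
        _ = (∑ a, pac a c) * (∑ b, pbc b c) / pc c := expand.symm
        _ = pc c * pc c / pc c := by rw [hmargA, hmargB]
    calc ∑ c, ∑ a, ∑ b, q (a, b, c) = ∑ c, pc c * pc c / pc c :=
          Finset.sum_congr rfl fun c _ => inner c
      _ ≤ ∑ c, pc c := by
          refine Finset.sum_le_sum fun c _ => ?_
          rcases eq_or_ne (pc c) 0 with h | h
          · simp [h]
          · rw [mul_div_assoc, div_self h, mul_one]
      _ = ∑ a, ∑ b, ∑ c, p (a, b, c) :=
          calc ∑ c, pc c = ∑ c, ∑ a, ∑ b, p (a, b, c) := rfl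
            _ = ∑ a, ∑ c, ∑ b, p (a, b, c) := Finset.sum_comm
            _ = ∑ a, ∑ b, ∑ c, p (a, b, c) :=
              Finset.sum_congr rfl fun a _ => Finset.sum_comm
      _ = 1 := by rw [← tri p, hsum]
  have hgibbs := han_gibbs p q hp hq0 hqne hqsum
  have H3 : (∑ t, Real.negMulLog (p t)) = ∑ t, -(p t * Real.log (p t)) := by
    simp [Real.negMulLog]
  have HACeq : (∑ x : A × C, Real.negMulLog (∑ b, p (x.1, b, x.2)))
      = ∑ t : A × B × C, -(p t * Real.log (pac t.1 t.2.2)) :=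
    calc (∑ x : A × C, Real.negMulLog (∑ b, p (x.1, b, x.2)))
        = ∑ a, ∑ c, Real.negMulLog (pac a c) := Fintype.sum_prod_type _
      _ = ∑ a, ∑ c, ∑ b, -(p (a, b, c) * Real.log (pac a c)) :=
          Finset.sum_congr rfl fun a _ => Finset.sum_congr rfl fun c _ =>
            han_negMulLog_sum_expand (fun b => p (a, b, c))
      _ = ∑ a, ∑ b, ∑ c, -(p (a, b, c) * Real.log (pac a c)) :=
          Finset.sum_congr rfl fun a _ => Finset.sum_comm
      _ = ∑ t : A × B × C, -(p t * Real.log (pac t.1 t.2.2)) :=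
          (tri (fun t => -(p t * Real.log (pac t.1 t.2.2)))).symm
  have HBCeq : (∑ x : B × C, Real.negMulLog (∑ a, p (a, x.1, x.2)))
      = ∑ t : A × B × C, -(p t * Real.log (pbc t.2.1 t.2.2)) :=
    calc (∑ x : B × C, Real.negMulLog (∑ a, p (a, x.1, x.2)))
        = ∑ b, ∑ c, Real.negMulLog (pbc b c) := Fintype.sum_prod_type _
      _ = ∑ b, ∑ c, ∑ a, -(p (a, b, c) * Real.log (pbc b c)) :=
          Finset.sum_congr rfl fun b _ => Finset.sum_congr rfl fun c _ =>
            han_negMulLog_sum_expand (fun a => p (a, b, c))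
      _ = ∑ b, ∑ a, ∑ c, -(p (a, b, c) * Real.log (pbc b c)) :=
          Finset.sum_congr rfl fun b _ => Finset.sum_comm
      _ = ∑ a, ∑ b, ∑ c, -(p (a, b, c) * Real.log (pbc b c)) := Finset.sum_comm
      _ = ∑ t : A × B × C, -(p t * Real.log (pbc t.2.1 t.2.2)) :=
          (tri (fun t => -(p t * Real.log (pbc t.2.1 t.2.2)))).symm
  have HCeq : (∑ c, Real.negMulLog (∑ a, ∑ b, p (a, b, c)))
      = ∑ t : A × B × C, -(p t * Real.log (pc t.2.2)) := by
    have step : ∀ c, Real.negMulLog (pc c) = ∑ a, ∑ b, -(p (a, b, c) * Real.log (pc c)) := by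
      intro c
      calc Real.negMulLog (pc c) = ∑ a, -(pac a c * Real.log (pc c)) :=
            han_negMulLog_sum_expand (fun a => pac a c)
        _ = ∑ a, ∑ b, -(p (a, b, c) * Real.log (pc c)) := by
            refine Finset.sum_congr rfl fun a _ => ?_
            have h1 : pac a c * Real.log (pc c) = ∑ b, p (a, b, c) * Real.log (pc c) :=
              Finset.sum_mul _ _ _
            rw [h1]
            exact (Finset.sum_neg_distrib _).symm
    calc (∑ c, Real.negMulLog (∑ a, ∑ b, p (a, b, c)))
        = ∑ c, ∑ a, ∑ b, -(p (a, b, c) * Real.log (pc c)) :=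
          Finset.sum_congr rfl fun c _ => step c
      _ = ∑ a, ∑ c, ∑ b, -(p (a, b, c) * Real.log (pc c)) := Finset.sum_comm
      _ = ∑ a, ∑ b, ∑ c, -(p (a, b, c) * Real.log (pc c)) :=
          Finset.sum_congr rfl fun a _ => Finset.sum_comm
      _ = ∑ t : A × B × C, -(p t * Real.log (pc t.2.2)) :=
          (tri (fun t => -(p t * Real.log (pc t.2.2)))).symm
  have ST : ∑ t, p t * Real.log (q t / p t)
      = (∑ t, -(p t * Real.log (p t))) + (∑ t, -(p t * Real.log (pc t.2.2)))
        - (∑ t, -(p t * Real.log (pac t.1 t.2.2)))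
        - (∑ t, -(p t * Real.log (pbc t.2.1 t.2.2))) := by
    rw [← Finset.sum_add_distrib, ← Finset.sum_sub_distrib, ← Finset.sum_sub_distrib]
    refine Finset.sum_congr rfl fun t _ => ?_
    rcases eq_or_ne (p t) 0 with h | h
    · simp [h]
    · have h1 : 0 < p t := lt_of_le_of_ne (hp t) (Ne.symm h)
      have h2 : pac t.1 t.2.2 ≠ 0 := ne_of_gt (lt_of_lt_of_le h1 (hle_ac t))
      have h3 : pbc t.2.1 t.2.2 ≠ 0 := ne_of_gt (lt_of_lt_of_le h1 (hle_bc t))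
      have h4 : pc t.2.2 ≠ 0 := ne_of_gt (lt_of_lt_of_le h1 (hle_c t))
      have hqd : q t / p t = pac t.1 t.2.2 * pbc t.2.1 t.2.2 / (pc t.2.2 * p t) :=
        div_div _ _ _
      rw [hqd, Real.log_div (mul_ne_zero h2 h3) (mul_ne_zero h4 h),
        Real.log_mul h2 h3, Real.log_mul h4 h]
      ring
  rw [ST] at hgibbs
  rw [H3, HACeq, HBCeq, HCeq]
  linarith

lemma han_measure_marg {Ω : Type*} [MeasurableSpace Ω] (μ : Measure Ω) [IsProbabilityMeasure μ]
    {T T' : Type*} [Fintype T] [DecidableEq T'] [MeasurableSpace T] [MeasurableSingletonClass T]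
    (W : Ω → T) (hW : Measurable W) (g : T → T') (t' : T') :
    (μ ((fun ω => g (W ω)) ⁻¹' {t'})).toReal
      = ∑ t ∈ Finset.univ.filter (fun t => g t = t'), (μ (W ⁻¹' {t})).toReal := by
  have hset : (fun ω => g (W ω)) ⁻¹' {t'}
      = ⋃ t ∈ (Finset.univ.filter (fun t => g t = t') : Finset T), W ⁻¹' {t} := by
    ext ω
    simp only [Set.mem_preimage, Set.mem_singleton_iff, Set.mem_iUnion, Finset.mem_filter,
      Finset.mem_univ, true_and]
    constructor
    · intro h; exact ⟨W ω, h, rfl⟩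
    · rintro ⟨t, h1, h2⟩; rw [h2]; exact h1
  rw [hset, measure_biUnion_finset ?_ ?_]
  · exact ENNReal.toReal_sum fun t _ => measure_ne_top μ _
  · intro t ht t2 ht2 hne
    exact Set.disjoint_iff_forall_ne.mpr (by
      rintro ω hω ω2 hω2 rfl
      exact hne (hω.symm.trans hω2))
  · exact fun t _ => hW (measurableSet_singleton t)

lemma han_sum_one {Ω : Type*} [MeasurableSpace Ω] (μ : Measure Ω) [IsProbabilityMeasure μ]
    {T : Type*} [Fintype T] [MeasurableSpace T] [MeasurableSingletonClass T]
    (W : Ω → T) (hW : Measurable W) :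
    ∑ t, (μ (W ⁻¹' {t})).toReal = 1 := by
  have hset : (Set.univ : Set Ω) = ⋃ t ∈ (Finset.univ : Finset T), W ⁻¹' {t} := by
    ext ω; simp
  have : μ (Set.univ : Set Ω) = ∑ t, μ (W ⁻¹' {t}) := by
    rw [hset, measure_biUnion_finset ?_ ?_]
    · intro t ht t2 ht2 hne
      exact Set.disjoint_iff_forall_ne.mpr (by
        rintro ω hω ω2 hω2 rfl
        exact hne (hω.symm.trans hω2))
    · exact fun t _ => hW (measurableSet_singleton t)
  have h2 : (1 : ℝ≥0∞) = ∑ t, μ (W ⁻¹' {t}) := by rw [← this, measure_univ]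
  rw [← ENNReal.toReal_sum fun t _ => measure_ne_top μ _, ← h2, ENNReal.toReal_one]

lemma han_filter_AC {A B C : Type*} [Fintype A] [Fintype B] [Fintype C]
    (f : A × B × C → ℝ) (a : A) (c : C)
    [D : DecidablePred (fun t : A × B × C => (t.1, t.2.2) = (a, c))] :
    ∑ t ∈ Finset.univ.filter (fun t : A × B × C => (t.1, t.2.2) = (a, c)), f t
      = ∑ b, f (a, b, c) := by
  classical
  have himg : Finset.univ.filter (fun t : A × B × C => (t.1, t.2.2) = (a, c))
      = Finset.univ.image (fun b => (a, b, c)) := by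
    ext ⟨a', b, c'⟩
    simp [Prod.ext_iff]
    aesop
  rw [himg, Finset.sum_image (by intro x _ y _ h; simpa [Prod.ext_iff] using h)]

lemma han_filter_BC {A B C : Type*} [Fintype A] [Fintype B] [Fintype C]
    (f : A × B × C → ℝ) (b : B) (c : C)
    [D : DecidablePred (fun t : A × B × C => (t.2.1, t.2.2) = (b, c))] :
    ∑ t ∈ Finset.univ.filter (fun t : A × B × C => (t.2.1, t.2.2) = (b, c)), f t
      = ∑ a, f (a, b, c) := by
  classical
  have himg : Finset.univ.filter (fun t : A × B × C => (t.2.1, t.2.2) = (b, c))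
      = Finset.univ.image (fun a => (a, b, c)) := by
    ext ⟨a', b', c'⟩
    simp [Prod.ext_iff]
    aesop
  rw [himg, Finset.sum_image (by intro x _ y _ h; simpa [Prod.ext_iff] using h)]

lemma han_filter_C {A B C : Type*} [Fintype A] [Fintype B] [Fintype C]
    (f : A × B × C → ℝ) (c : C)
    [D : DecidablePred (fun t : A × B × C => t.2.2 = c)] :
    ∑ t ∈ Finset.univ.filter (fun t : A × B × C => t.2.2 = c), f t
      = ∑ a, ∑ b, f (a, b, c) := by
  classical
  have himg : Finset.univ.filter (fun t : A × B × C => t.2.2 = c)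
      = Finset.univ.image (fun x : A × B => (x.1, x.2, c)) := by
    ext ⟨a', b', c'⟩
    simp [Prod.ext_iff]
    aesop
  rw [himg, Finset.sum_image (by rintro ⟨x1, x2⟩ _ ⟨y1, y2⟩ _ h; simpa [Prod.ext_iff] using h)]
  exact Fintype.sum_prod_type _

lemma han_entH_submod {Ω : Type*} [MeasurableSpace Ω] (μ : Measure Ω) [IsProbabilityMeasure μ]
    {A B C : Type*} [Fintype A] [Fintype B] [Fintype C]
    [MeasurableSpace A] [MeasurableSingletonClass A]
    [MeasurableSpace B] [MeasurableSingletonClass B]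
    [MeasurableSpace C] [MeasurableSingletonClass C]
    (X : Ω → A) (Y : Ω → B) (Z : Ω → C)
    (hX : Measurable X) (hY : Measurable Y) (hZ : Measurable Z) :
    entH μ (fun ω => (X ω, Y ω, Z ω)) + entH μ Z ≤
      entH μ (fun ω => (X ω, Z ω)) + entH μ (fun ω => (Y ω, Z ω)) := by
  classical
  set W : Ω → A × B × C := fun ω => (X ω, Y ω, Z ω) with hWdef
  have hW : Measurable W := hX.prodMk (hY.prodMk hZ)
  set p : A × B × C → ℝ := fun t => (μ (W ⁻¹' {t})).toReal with hpdef
  have hp : ∀ t, 0 ≤ p t := fun t => ENNReal.toReal_nonneg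
  have hsum : ∑ t, p t = 1 := han_sum_one μ W hW
  have e3 : entH μ W = ∑ t, Real.negMulLog (p t) := rfl
  have eC : entH μ Z = ∑ c, Real.negMulLog (∑ a, ∑ b, p (a, b, c)) := by
    refine Finset.sum_congr rfl fun c _ => ?_
    have h1 : (μ ((fun ω => (W ω).2.2) ⁻¹' {c})).toReal
        = ∑ t ∈ Finset.univ.filter (fun t : A × B × C => t.2.2 = c), p t :=
      han_measure_marg μ W hW (fun t => t.2.2) c
    have h2 : (μ (Z ⁻¹' {c})).toReal
        = ∑ t ∈ Finset.univ.filter (fun t : A × B × C => t.2.2 = c), p t := h1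
    rw [h2, han_filter_C]
  have eAC : entH μ (fun ω => (X ω, Z ω))
      = ∑ x : A × C, Real.negMulLog (∑ b, p (x.1, b, x.2)) := by
    refine Finset.sum_congr rfl fun x _ => ?_
    have h1 : (μ ((fun ω => ((W ω).1, (W ω).2.2)) ⁻¹' {x})).toReal
        = ∑ t ∈ Finset.univ.filter (fun t : A × B × C => (t.1, t.2.2) = x), p t :=
      han_measure_marg μ W hW (fun t => (t.1, t.2.2)) x
    have h2 : (μ ((fun ω => (X ω, Z ω)) ⁻¹' {x})).toReal
        = ∑ t ∈ Finset.univ.filter (fun t : A × B × C => (t.1, t.2.2) = (x.1, x.2)), p t := h1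
    rw [h2, han_filter_AC]
  have eBC : entH μ (fun ω => (Y ω, Z ω))
      = ∑ x : B × C, Real.negMulLog (∑ a, p (a, x.1, x.2)) := by
    refine Finset.sum_congr rfl fun x _ => ?_
    have h1 : (μ ((fun ω => ((W ω).2.1, (W ω).2.2)) ⁻¹' {x})).toReal
        = ∑ t ∈ Finset.univ.filter (fun t : A × B × C => (t.2.1, t.2.2) = x), p t :=
      han_measure_marg μ W hW (fun t => (t.2.1, t.2.2)) x
    have h2 : (μ ((fun ω => (Y ω, Z ω)) ⁻¹' {x})).toReal
        = ∑ t ∈ Finset.univ.filter (fun t : A × B × C => (t.2.1, t.2.2) = (x.1, x.2)), p t := h1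
    rw [h2, han_filter_BC]
  rw [e3, eC, eAC, eBC]
  exact han_pure_submod p hp hsum

lemma han_entH_comp_inj {Ω : Type*} [MeasurableSpace Ω] (μ : Measure Ω)
    {T T' : Type*} [Fintype T] [Fintype T'] (W : Ω → T) (g : T → T')
    (hg : Function.Injective g) :
    entH μ (fun ω => g (W ω)) = entH μ W := by
  classical
  have h0 : ∀ t' ∈ (Finset.univ : Finset T'), t' ∉ Finset.univ.image g →
      Real.negMulLog ((μ ((fun ω => g (W ω)) ⁻¹' {t'})).toReal) = 0 := by
    intro t' _ ht'
    have hempty : (fun ω => g (W ω)) ⁻¹' {t'} = ∅ := by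
      ext ω
      simp only [Set.mem_preimage, Set.mem_singleton_iff, Set.mem_empty_iff_false, iff_false]
      intro h
      exact ht' (Finset.mem_image.mpr ⟨W ω, Finset.mem_univ _, h⟩)
    simp [hempty]
  rw [entH, ← Finset.sum_subset (Finset.subset_univ (Finset.univ.image g)) h0]
  rw [Finset.sum_image (fun x _ y _ h => hg h)]
  refine Finset.sum_congr rfl fun t _ => ?_
  have hpre : (fun ω => g (W ω)) ⁻¹' {g t} = W ⁻¹' {t} := by
    ext ω; simp [hg.eq_iff]
  rw [hpre]

lemma han_entH_nonneg {Ω : Type*} [MeasurableSpace Ω] (μ : Measure Ω) [IsProbabilityMeasure μ]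
    {T : Type*} [Fintype T] (W : Ω → T) : 0 ≤ entH μ W := by
  refine Finset.sum_nonneg fun t _ => Real.negMulLog_nonneg ENNReal.toReal_nonneg ?_
  calc (μ (W ⁻¹' {t})).toReal ≤ (1 : ℝ≥0∞).toReal :=
        ENNReal.toReal_mono ENNReal.one_ne_top prob_le_one
    _ = 1 := ENNReal.toReal_one

def hanRes {ι : Type*} {S : ι → Type*} {A B : Finset ι} (h : A ⊆ B) (f : (i : B) → S i) :
    (i : A) → S i := fun i => f ⟨i.1, h i.2⟩

lemma han_entHset_submod {Ω : Type*} [MeasurableSpace Ω] (μ : Measure Ω) [IsProbabilityMeasure μ]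
    {ι : Type*} [DecidableEq ι] {S : ι → Type*} [∀ i, Fintype (S i)]
    [∀ i, MeasurableSpace (S i)] [∀ i, MeasurableSingletonClass (S i)]
    (X : ∀ i, Ω → S i) (hX : ∀ i, Measurable (X i)) (A B : Finset ι) :
    entHset μ X (A ∪ B) + entHset μ X (A ∩ B) ≤ entHset μ X A + entHset μ X B := by
  have hm : ∀ V : Finset ι, Measurable (jointOn X V) := fun V =>
    measurable_pi_lambda _ fun i => hX i
  have h1 : (A \ B : Finset ι) ⊆ A ∪ B := fun i hi =>
    Finset.mem_union_left _ (Finset.mem_sdiff.mp hi).1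
  have h2 : (B \ A : Finset ι) ⊆ A ∪ B := fun i hi =>
    Finset.mem_union_right _ (Finset.mem_sdiff.mp hi).1
  have h3 : A ∩ B ⊆ A ∪ B := fun i hi => Finset.mem_union_left _ (Finset.mem_inter.mp hi).1
  have hA1 : (A \ B : Finset ι) ⊆ A := Finset.sdiff_subset
  have hA3 : A ∩ B ⊆ A := Finset.inter_subset_left
  have hB1 : (B \ A : Finset ι) ⊆ B := Finset.sdiff_subset
  have hB3 : A ∩ B ⊆ B := Finset.inter_subset_right
  set g : ((i : (A ∪ B : Finset ι)) → S i) →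
      ((i : (A \ B : Finset ι)) → S i) × ((i : (B \ A : Finset ι)) → S i) ×
        ((i : (A ∩ B : Finset ι)) → S i) :=
    fun f => (hanRes h1 f, hanRes h2 f, hanRes h3 f) with hgdef
  have hg : Function.Injective g := by
    intro f f' h
    have e1 := congrArg Prod.fst h
    have e2 := congrArg (fun x => x.2.1) h
    have e3 := congrArg (fun x => x.2.2) h
    funext ⟨i, hi⟩
    rcases Finset.mem_union.mp hi with hiA | hiB
    · by_cases hB : i ∈ B
      · exact congrFun e3 ⟨i, Finset.mem_inter.mpr ⟨hiA, hB⟩⟩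
      · exact congrFun e1 ⟨i, Finset.mem_sdiff.mpr ⟨hiA, hB⟩⟩
    · by_cases hA : i ∈ A
      · exact congrFun e3 ⟨i, Finset.mem_inter.mpr ⟨hA, hiB⟩⟩
      · exact congrFun e2 ⟨i, Finset.mem_sdiff.mpr ⟨hiB, hA⟩⟩
  set gA : ((i : A) → S i) → ((i : (A \ B : Finset ι)) → S i) × ((i : (A ∩ B : Finset ι)) → S i) :=
    fun f => (hanRes hA1 f, hanRes hA3 f) with hgAdef
  have hgA : Function.Injective gA := by
    intro f f' h
    have e1 := congrArg Prod.fst h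
    have e2 := congrArg Prod.snd h
    funext ⟨i, hi⟩
    by_cases hB : i ∈ B
    · exact congrFun e2 ⟨i, Finset.mem_inter.mpr ⟨hi, hB⟩⟩
    · exact congrFun e1 ⟨i, Finset.mem_sdiff.mpr ⟨hi, hB⟩⟩
  set gB : ((i : B) → S i) → ((i : (B \ A : Finset ι)) → S i) × ((i : (A ∩ B : Finset ι)) → S i) :=
    fun f => (hanRes hB1 f, hanRes hB3 f) with hgBdef
  have hgB : Function.Injective gB := by
    intro f f' h
    have e1 := congrArg Prod.fst h
    have e2 := congrArg Prod.snd h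
    funext ⟨i, hi⟩
    by_cases hA : i ∈ A
    · exact congrFun e2 ⟨i, Finset.mem_inter.mpr ⟨hA, hi⟩⟩
    · exact congrFun e1 ⟨i, Finset.mem_sdiff.mpr ⟨hi, hA⟩⟩
  have key := han_entH_submod μ (jointOn X (A \ B)) (jointOn X (B \ A)) (jointOn X (A ∩ B))
    (hm _) (hm _) (hm _)
  have eq1 : entH μ (fun ω => (jointOn X (A \ B) ω, jointOn X (B \ A) ω, jointOn X (A ∩ B) ω))
      = entHset μ X (A ∪ B) := han_entH_comp_inj μ (jointOn X (A ∪ B)) g hg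
  have eqA : entH μ (fun ω => (jointOn X (A \ B) ω, jointOn X (A ∩ B) ω))
      = entHset μ X A := han_entH_comp_inj μ (jointOn X A) gA hgA
  have eqB : entH μ (fun ω => (jointOn X (B \ A) ω, jointOn X (A ∩ B) ω))
      = entHset μ X B := han_entH_comp_inj μ (jointOn X B) gB hgB
  rw [eq1, eqA, eqB] at key
  exact key

lemma han_key {Ω : Type*} [MeasurableSpace Ω] (μ : Measure Ω) [IsProbabilityMeasure μ]
    {ι : Type*} [DecidableEq ι] {S : ι → Type*} [∀ i, Fintype (S i)]
    [∀ i, MeasurableSpace (S i)] [∀ i, MeasurableSingletonClass (S i)]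
    (X : ∀ i, Ω → S i) (hX : ∀ i, Measurable (X i)) (U : Finset ι) :
    ((U.card : ℝ) - 1) * entHset μ X U ≤ ∑ i ∈ U, entHset μ X (U.erase i) := by
  induction U using Finset.induction_on with
  | empty =>
    simp only [Finset.card_empty, Finset.sum_empty, Nat.cast_zero]
    have h0 : 0 ≤ entHset μ X (∅ : Finset ι) := han_entH_nonneg μ _
    nlinarith [h0]
  | @insert j V hj IH =>
    have step : ∀ i ∈ V, entHset μ X (insert j V) + entHset μ X (V.erase i) - entHset μ X V
        ≤ entHset μ X ((insert j V).erase i) := by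
      intro i hi
      have hij : i ≠ j := fun h => hj (h ▸ hi)
      have hU : (insert j V).erase i ∪ V = insert j V := by
        ext x
        simp only [Finset.mem_union, Finset.mem_erase, Finset.mem_insert]
        constructor
        · rintro (⟨_, h⟩ | h)
          · exact h
          · exact Or.inr h
        · rintro (rfl | h)
          · exact Or.inl ⟨hij.symm, Or.inl rfl⟩
          · exact Or.inr h
      have hI : (insert j V).erase i ∩ V = V.erase i := by
        ext x
        simp only [Finset.mem_inter, Finset.mem_erase, Finset.mem_insert]
        constructor
        · rintro ⟨⟨hxi, _⟩, hxV⟩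
          exact ⟨hxi, hxV⟩
        · rintro ⟨hxi, hxV⟩
          exact ⟨⟨hxi, Or.inr hxV⟩, hxV⟩
      have := han_entHset_submod μ X hX ((insert j V).erase i) V
      rw [hU, hI] at this
      linarith
    have hsum2 := Finset.sum_le_sum step
    rw [Finset.sum_sub_distrib, Finset.sum_add_distrib, Finset.sum_const, Finset.sum_const] at hsum2
    rw [Finset.sum_insert hj, Finset.erase_insert hj, Finset.card_insert_of_notMem hj]
    push_cast
    simp only [nsmul_eq_mul] at hsum2
    linarith

lemma han_double_count {ι : Type*} [Fintype ι] [DecidableEq ι] (g : Finset ι → ℝ) (α : ℕ)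
    (hα : 1 ≤ α) :
    ∑ U ∈ Finset.powersetCard α (Finset.univ : Finset ι), ∑ i ∈ U, g (U.erase i)
      = ((Fintype.card ι - (α - 1) : ℕ) : ℝ) *
          ∑ V ∈ Finset.powersetCard (α - 1) (Finset.univ : Finset ι), g V := by
  rw [Finset.sum_sigma' (Finset.powersetCard α (Finset.univ : Finset ι)) (fun U => U)
    (fun U i => g (U.erase i))]
  have := Finset.sum_nbij' (s := (Finset.powersetCard α (Finset.univ : Finset ι)).sigma fun U => (U : Finset ι))
    (t := (Finset.powersetCard (α - 1) (Finset.univ : Finset ι)).sigma fun V => (Vᶜ : Finset ι))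
    (f := fun p => g (p.1.erase p.2)) (g := fun p => g p.1)
    (i := fun p => ⟨p.1.erase p.2, p.2⟩) (j := fun p => ⟨insert p.2 p.1, p.2⟩)
    ?_ ?_ ?_ ?_ ?_
  · rw [this]
    rw [Finset.sum_sigma]
    rw [Finset.mul_sum]
    refine Finset.sum_congr rfl fun V hV => ?_
    show ∑ _s ∈ Vᶜ, g V = _
    rw [Finset.sum_const, nsmul_eq_mul]
    have hVcard : V.card = α - 1 := (Finset.mem_powersetCard.mp hV).2
    rw [Finset.card_compl, hVcard]
  · rintro ⟨U, i⟩ hp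
    rw [Finset.mem_sigma] at hp ⊢
    obtain ⟨hU, hiU⟩ := hp
    rw [Finset.mem_powersetCard] at hU
    refine ⟨Finset.mem_powersetCard.mpr ⟨Finset.subset_univ _, ?_⟩, ?_⟩
    · rw [Finset.card_erase_of_mem hiU, hU.2]
    · simp [Finset.mem_compl]
  · rintro ⟨V, i⟩ hp
    rw [Finset.mem_sigma] at hp ⊢
    obtain ⟨hV, hiV⟩ := hp
    rw [Finset.mem_powersetCard] at hV
    rw [Finset.mem_compl] at hiV
    refine ⟨Finset.mem_powersetCard.mpr ⟨Finset.subset_univ _, ?_⟩, Finset.mem_insert_self _ _⟩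
    rw [Finset.card_insert_of_notMem hiV, hV.2]
    omega
  · rintro ⟨U, i⟩ hp
    rw [Finset.mem_sigma] at hp
    exact Sigma.ext (by simp [Finset.insert_erase hp.2]) (by simp)
  · rintro ⟨V, i⟩ hp
    rw [Finset.mem_sigma] at hp
    have hiV : i ∉ V := Finset.mem_compl.mp hp.2
    exact Sigma.ext (by simp [Finset.erase_insert hiV]) (by simp)
  · rintro ⟨U, i⟩ _
    rfl

/-- **Han's subset entropy inequality** (Theorem 1). -/
theorem han_subset_entropy_inequality
    {Ω : Type*} [MeasurableSpace Ω] (μ : Measure Ω) [IsProbabilityMeasure μ]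
    {L : ℕ} (hL : 2 ≤ L) {S : Fin L → Type*} [∀ l, Fintype (S l)]
    [∀ l, MeasurableSpace (S l)] [∀ l, MeasurableSingletonClass (S l)]
    (X : ∀ l, Ω → S l) (hX : ∀ l, Measurable (X l))
    (α : ℕ) (hα1 : 2 ≤ α) (hα2 : α ≤ L) :
    (1 / (Nat.choose L (α - 1) : ℝ)) *
        ∑ V ∈ Finset.powersetCard (α - 1) (Finset.univ : Finset (Fin L)),
          entHset μ X V / ((α : ℝ) - 1) ≥
      (1 / (Nat.choose L α : ℝ)) *
        ∑ U ∈ Finset.powersetCard α (Finset.univ : Finset (Fin L)),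
          entHset μ X U / (α : ℝ) := by
  have hkeysum : ((α : ℝ) - 1) *
      ∑ U ∈ Finset.powersetCard α (Finset.univ : Finset (Fin L)), entHset μ X U ≤
      ((L - (α - 1) : ℕ) : ℝ) *
        ∑ V ∈ Finset.powersetCard (α - 1) (Finset.univ : Finset (Fin L)), entHset μ X V := by
    have hdc := han_double_count (entHset μ X) α (by omega)
    rw [Fintype.card_fin] at hdc
    calc ((α : ℝ) - 1) * ∑ U ∈ Finset.powersetCard α (Finset.univ : Finset (Fin L)), entHset μ X U
        = ∑ U ∈ Finset.powersetCard α (Finset.univ : Finset (Fin L)),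
            ((α : ℝ) - 1) * entHset μ X U := Finset.mul_sum _ _ _
      _ ≤ ∑ U ∈ Finset.powersetCard α (Finset.univ : Finset (Fin L)),
            ∑ i ∈ U, entHset μ X (U.erase i) := by
          refine Finset.sum_le_sum fun U hU => ?_
          have hcard : U.card = α := (Finset.mem_powersetCard.mp hU).2
          have hk := han_key μ X hX U
          rw [hcard] at hk
          exact hk
      _ = _ := hdc
  set S1 := ∑ V ∈ Finset.powersetCard (α - 1) (Finset.univ : Finset (Fin L)), entHset μ X V
    with hS1
  set S2 := ∑ U ∈ Finset.powersetCard α (Finset.univ : Finset (Fin L)), entHset μ X U with hS2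
  have hc1 : (0 : ℝ) < (Nat.choose L (α - 1) : ℝ) := by
    exact_mod_cast Nat.choose_pos (by omega)
  have hc2 : (0 : ℝ) < (Nat.choose L α : ℝ) := by exact_mod_cast Nat.choose_pos hα2
  have hα1R : (0 : ℝ) < (α : ℝ) - 1 := by
    have : (2 : ℝ) ≤ (α : ℝ) := by exact_mod_cast hα1
    linarith
  have hαR : (0 : ℝ) < (α : ℝ) := by linarith
  have hm : (0 : ℝ) < ((L - (α - 1) : ℕ) : ℝ) := by
    have : 0 < L - (α - 1) := by omega
    exact_mod_cast this
  have hbin : (Nat.choose L α : ℝ) * (α : ℝ)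
      = (Nat.choose L (α - 1) : ℝ) * ((L - (α - 1) : ℕ) : ℝ) := by
    have h := Nat.choose_succ_right_eq L (α - 1)
    have h2 : α - 1 + 1 = α := by omega
    rw [h2] at h
    exact_mod_cast h
  rw [ge_iff_le]
  rw [show (∑ V ∈ Finset.powersetCard (α - 1) (Finset.univ : Finset (Fin L)),
      entHset μ X V / ((α : ℝ) - 1)) = S1 / ((α : ℝ) - 1) from (Finset.sum_div _ _ _).symm]
  rw [show (∑ U ∈ Finset.powersetCard α (Finset.univ : Finset (Fin L)),
      entHset μ X U / (α : ℝ)) = S2 / (α : ℝ) from (Finset.sum_div _ _ _).symm]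
  have e1 : (1 / (Nat.choose L (α - 1) : ℝ)) * (S1 / ((α : ℝ) - 1))
      = S1 / ((Nat.choose L (α - 1) : ℝ) * ((α : ℝ) - 1)) := by
    rw [div_mul_div_comm, one_mul]
  have e2 : (1 / (Nat.choose L α : ℝ)) * (S2 / (α : ℝ))
      = S2 / ((Nat.choose L α : ℝ) * (α : ℝ)) := by
    rw [div_mul_div_comm, one_mul]
  rw [e1, e2, div_le_div_iff₀ (by positivity) (by positivity)]
  rw [hbin]
  calc S2 * ((Nat.choose L (α - 1) : ℝ) * ((α : ℝ) - 1))
      = (Nat.choose L (α - 1) : ℝ) * (((α : ℝ) - 1) * S2) := by ring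
    _ ≤ (Nat.choose L (α - 1) : ℝ) * (((L - (α - 1) : ℕ) : ℝ) * S1) :=
        mul_le_mul_of_nonneg_left hkeysum hc1.le
    _ = S1 * ((Nat.choose L (α - 1) : ℝ) * ((L - (α - 1) : ℕ) : ℝ)) := by ring
end

section
/- Chain form of the Madiman–Tetali inequality (Corollary 1): Let Σ be a finite ground set, let M be a positive integer, and let Σ^{(1)},…,Σ^{(M)} be mutually exclusive collections of subsets of Σ. For U ∈ Σ^{(α)} (2 ≤ α ≤ M), let 𝒱_U := {V ∈ Σ^{(α−1)} : V ⊆ U}, and for V ∈ Σ^{(α−1)}, let 𝒰_V := {U ∈ Σ^{(α)} : U ⊇ V}. Let c : ∪_{α=1}^{M} Σ^{(α)} → ℝ≥0 and fix α ∈ {2,…,M}. If there exists a collection of functions {g_U : U ∈ Σ^{(α)}} such that each g_U is a fractional cover of the hypergraph (U, 𝒱_U) and c(V) = ∑_{U ∈ 𝒰_V} g_U(V) c(U) for every V ∈ Σ^{(α−1)}, then ∑_{V ∈ Σ^{(α−1)}} c(V) H(X_V) ≥ ∑_{U ∈ Σ^{(α)}} c(U) H(X_U) for any jointly distributed random variables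 X_Σ = (X_i : i ∈ Σ) each taking values in a finite set. -/
open MeasureTheory ProbabilityTheory

open Real Finset
open scoped Classical

section PurePMF

variable {T : Type*} [Fintype T]

noncomputable def pmass (p : T → ℝ) {A : Type*} (f : T → A) (a : A) : ℝ :=
  ∑ t ∈ univ.filter (fun t => f t = a), p t

noncomputable def pH (p : T → ℝ) {A : Type*} [Fintype A] (f : T → A) : ℝ :=
  ∑ a : A, negMulLog (pmass p f a)

lemma pmass_nonneg {p : T → ℝ} (hp : ∀ t, 0 ≤ p t) {A : Type*} (f : T → A) (a : A) :
    0 ≤ pmass p f a :=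
  Finset.sum_nonneg fun t _ => hp t

lemma pmass_iff (p : T → ℝ) {A A' : Type*} (F : T → A) (G : T → A') (a : A) (a' : A')
    (hI : ∀ t, F t = a ↔ G t = a') : pmass p F a = pmass p G a' := by
  unfold pmass
  refine Finset.sum_congr ?_ fun _ _ => rfl
  ext t; simp [hI t]

lemma negMulLog_sum_le {β : Type*} (s : Finset β) (m : β → ℝ) (hm : ∀ b ∈ s, 0 ≤ m b) :
    negMulLog (∑ b ∈ s, m b) ≤ ∑ b ∈ s, negMulLog (m b) := by
  have hS0 : 0 ≤ ∑ b ∈ s, m b := Finset.sum_nonneg hm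
  rw [negMulLog, neg_mul, Finset.sum_mul, ← Finset.sum_neg_distrib]
  refine Finset.sum_le_sum fun b hb => ?_
  rw [negMulLog, neg_mul, neg_le_neg_iff]
  rcases eq_or_lt_of_le (hm b hb) with h0 | h0
  · simp [← h0]
  · exact mul_le_mul_of_nonneg_left
      (Real.log_le_log h0 (Finset.single_le_sum hm hb)) (hm b hb)

lemma pmass_comp (p : T → ℝ) {A B : Type*} [Fintype A] (φ : A → B) (F : T → A) (b : B) :
    pmass p (fun t => φ (F t)) b = ∑ a ∈ univ.filter (fun a => φ a = b), pmass p F a := by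
  unfold pmass
  rw [Finset.sum_fiberwise_eq_sum_filter univ (univ.filter (fun a => φ a = b)) F p]
  refine Finset.sum_congr ?_ fun _ _ => rfl
  ext t; simp

lemma pH_comp_le (p : T → ℝ) (hp : ∀ t, 0 ≤ p t) {A B : Type*} [Fintype A] [Fintype B]
    (φ : A → B) (F : T → A) :
    pH p (fun t => φ (F t)) ≤ pH p F := by
  unfold pH
  calc ∑ b : B, negMulLog (pmass p (fun t => φ (F t)) b)
      = ∑ b : B, negMulLog (∑ a ∈ univ.filter (fun a => φ a = b), pmass p F a) := by
        simp_rw [pmass_comp]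
    _ ≤ ∑ b : B, ∑ a ∈ univ.filter (fun a => φ a = b), negMulLog (pmass p F a) :=
        Finset.sum_le_sum fun b _ => negMulLog_sum_le _ _ (fun a _ => pmass_nonneg hp F a)
    _ = ∑ a : A, negMulLog (pmass p F a) := Finset.sum_fiberwise _ _ _

lemma pmass_pair_right (p : T → ℝ) {A B : Type*} [Fintype B] (F : T → A) (G : T → B) (a : A) :
    pmass p F a = ∑ b : B, pmass p (fun t => (F t, G t)) (a, b) := by
  unfold pmass
  rw [← Finset.sum_fiberwise (univ.filter (fun t => F t = a)) G p]
  refine Finset.sum_congr rfl fun b _ => ?_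
  rw [Finset.filter_filter]
  refine Finset.sum_congr ?_ fun _ _ => rfl
  ext t; simp [Prod.ext_iff]

lemma pmass_pair_left (p : T → ℝ) {A B : Type*} [Fintype A] (F : T → A) (G : T → B) (b : B) :
    pmass p G b = ∑ a : A, pmass p (fun t => (F t, G t)) (a, b) := by
  unfold pmass
  rw [← Finset.sum_fiberwise (univ.filter (fun t => G t = b)) F p]
  refine Finset.sum_congr rfl fun a _ => ?_
  rw [Finset.filter_filter]
  refine Finset.sum_congr ?_ fun _ _ => rfl
  ext t; simp [Prod.ext_iff, and_comm]

lemma key_ineq {q qab qbc qb : ℝ} (hq : 0 ≤ q) (hqab : q ≤ qab) (hqbc : q ≤ qbc)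
    (hqb : q ≤ qb) (h1 : 0 ≤ qab) (h2 : 0 ≤ qbc) (h3 : 0 ≤ qb) :
    q - qab * qbc / qb ≤
      (-(q * log qab) + -(q * log qbc)) - (negMulLog q + -(q * log qb)) := by
  rcases eq_or_lt_of_le hq with h0 | h0
  · have : 0 ≤ qab * qbc / qb := div_nonneg (mul_nonneg h1 h2) h3
    simp [← h0]
    linarith
  · have hqab' : 0 < qab := lt_of_lt_of_le h0 hqab
    have hqbc' : 0 < qbc := lt_of_lt_of_le h0 hqbc
    have hqb' : 0 < qb := lt_of_lt_of_le h0 hqb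
    have hx : 0 < qab * qbc / (q * qb) := by positivity
    have hlog := Real.log_le_sub_one_of_pos hx
    have hexp : log (qab * qbc / (q * qb)) = log qab + log qbc - log q - log qb := by
      rw [Real.log_div (by positivity) (by positivity), Real.log_mul (ne_of_gt hqab') (ne_of_gt hqbc'),
        Real.log_mul (ne_of_gt h0) (ne_of_gt hqb')]
      ring
    have hmul := mul_le_mul_of_nonneg_left hlog hq
    rw [hexp] at hmul
    have hval : q * (qab * qbc / (q * qb) - 1) = qab * qbc / qb - q := by
      field_simp
    rw [hval] at hmul
    rw [negMulLog]
    nlinarith [hmul]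

lemma cmi_pure {A B C : Type*} [Fintype A] [Fintype B] [Fintype C]
    (q : A → B → C → ℝ) (hq : ∀ a b c, 0 ≤ q a b c) :
    (∑ a, ∑ b, ∑ c, negMulLog (q a b c)) + ∑ b, negMulLog (∑ a, ∑ c, q a b c)
      ≤ (∑ a, ∑ b, negMulLog (∑ c, q a b c)) + ∑ b, ∑ c, negMulLog (∑ a, q a b c) := by
  set Qab : A → B → ℝ := fun a b => ∑ c, q a b c with hQab
  set Qbc : B → C → ℝ := fun b c => ∑ a, q a b c with hQbc
  set Qb : B → ℝ := fun b => ∑ a, ∑ c, q a b c with hQb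
  have hQab0 : ∀ a b, 0 ≤ Qab a b := fun a b => Finset.sum_nonneg fun c _ => hq a b c
  have hQbc0 : ∀ b c, 0 ≤ Qbc b c := fun b c => Finset.sum_nonneg fun a _ => hq a b c
  have hQb0 : ∀ b, 0 ≤ Qb b := fun b =>
    Finset.sum_nonneg fun a _ => Finset.sum_nonneg fun c _ => hq a b c
  -- rewrite all four sums as triple sums
  have e1 : ∑ a, ∑ b, negMulLog (Qab a b) = ∑ a, ∑ b, ∑ c, -(q a b c * log (Qab a b)) := by
    refine Finset.sum_congr rfl fun a _ => Finset.sum_congr rfl fun b _ => ?_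
    rw [negMulLog, neg_mul, hQab, Finset.sum_mul, ← Finset.sum_neg_distrib]
  have e2 : ∑ a, ∑ b, ∑ c, -(q a b c * log (Qbc b c)) = ∑ b, ∑ c, negMulLog (Qbc b c) := by
    rw [Finset.sum_comm]
    refine Finset.sum_congr rfl fun b _ => ?_
    rw [Finset.sum_comm]
    refine Finset.sum_congr rfl fun c _ => ?_
    rw [negMulLog, neg_mul, hQbc, Finset.sum_mul, ← Finset.sum_neg_distrib]
  have e3 : ∑ a, ∑ b, ∑ c, -(q a b c * log (Qb b)) = ∑ b, negMulLog (Qb b) := by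
    rw [Finset.sum_comm]
    refine Finset.sum_congr rfl fun b _ => ?_
    rw [negMulLog, neg_mul, hQb, Finset.sum_mul, ← Finset.sum_neg_distrib]
    refine Finset.sum_congr rfl fun a _ => ?_
    rw [Finset.sum_mul, ← Finset.sum_neg_distrib]
  rw [e1, ← e2, ← e3, ← sub_nonneg]
  have hmarg : ∀ b, ∑ a, ∑ c, (Qab a b * Qbc b c / Qb b) = Qb b * Qb b / Qb b := by
    intro b
    have h1 : ∑ a, ∑ c, Qab a b * Qbc b c / Qb b
        = (∑ a, Qab a b) * (∑ c, Qbc b c) / Qb b := by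
      rw [Finset.sum_mul_sum, Finset.sum_div]
      refine Finset.sum_congr rfl fun a _ => ?_
      rw [Finset.sum_div]
    have h2 : ∑ a, Qab a b = Qb b := rfl
    have h3 : ∑ c, Qbc b c = Qb b := by
      rw [hQbc, hQb]
      exact Finset.sum_comm
    rw [h1, h2, h3]
  have hstep : ∑ a, ∑ b, ∑ c, (q a b c - Qab a b * Qbc b c / Qb b)
      ≤ ((∑ a, ∑ b, ∑ c, -(q a b c * log (Qab a b)))
          + ∑ a, ∑ b, ∑ c, -(q a b c * log (Qbc b c)))
        - ((∑ a, ∑ b, ∑ c, negMulLog (q a b c)) + ∑ a, ∑ b, ∑ c, -(q a b c * log (Qb b))) := by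
    have hk : ∀ a b c, q a b c - Qab a b * Qbc b c / Qb b
        ≤ (-(q a b c * log (Qab a b)) + -(q a b c * log (Qbc b c)))
          - (negMulLog (q a b c) + -(q a b c * log (Qb b))) := by
      intro a b c
      refine key_ineq (hq a b c)
        (Finset.single_le_sum (fun c _ => hq a b c) (mem_univ c))
        (Finset.single_le_sum (fun a _ => hq a b c) (mem_univ a))
        (le_trans (Finset.single_le_sum (fun c _ => hq a b c) (mem_univ c))
          (Finset.single_le_sum (f := fun a => ∑ c, q a b c)
            (fun a _ => Finset.sum_nonneg fun c _ => hq a b c) (mem_univ a)))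
        (hQab0 a b) (hQbc0 b c) (hQb0 b)
    calc ∑ a, ∑ b, ∑ c, (q a b c - Qab a b * Qbc b c / Qb b)
        ≤ ∑ a, ∑ b, ∑ c, ((-(q a b c * log (Qab a b)) + -(q a b c * log (Qbc b c)))
            - (negMulLog (q a b c) + -(q a b c * log (Qb b)))) :=
          Finset.sum_le_sum fun a _ => Finset.sum_le_sum fun b _ =>
            Finset.sum_le_sum fun c _ => hk a b c
      _ = _ := by simp [Finset.sum_sub_distrib, Finset.sum_add_distrib]
  refine le_trans ?_ hstep
  have htel : ∑ a, ∑ b, ∑ c, (q a b c - Qab a b * Qbc b c / Qb b)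
      = ∑ b, (Qb b - Qb b * Qb b / Qb b) := by
    rw [Finset.sum_comm]
    refine Finset.sum_congr rfl fun b _ => ?_
    calc ∑ a, ∑ c, (q a b c - Qab a b * Qbc b c / Qb b)
        = (∑ a, ∑ c, q a b c) - ∑ a, ∑ c, Qab a b * Qbc b c / Qb b := by
          rw [← Finset.sum_sub_distrib]
          exact Finset.sum_congr rfl fun a _ => Finset.sum_sub_distrib _ _
      _ = Qb b - Qb b * Qb b / Qb b := by rw [hmarg b]
  rw [htel]
  refine Finset.sum_nonneg fun b _ => ?_
  rcases eq_or_lt_of_le (hQb0 b) with h0 | h0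
  · simp [← h0]
  · rw [mul_div_assoc, div_self (ne_of_gt h0), mul_one]
    simp

lemma pH_submod (p : T → ℝ) (hp : ∀ t, 0 ≤ p t) {A B C : Type*}
    [Fintype A] [Fintype B] [Fintype C]
    (f : T → A) (g : T → B) (h : T → C) :
    pH p (fun t => (f t, g t, h t)) + pH p g
      ≤ pH p (fun t => (f t, g t)) + pH p (fun t => (g t, h t)) := by
  set q : A → B → C → ℝ := fun a b c => pmass p (fun t => (f t, g t, h t)) (a, b, c) with hqdef
  have hq : ∀ a b c, 0 ≤ q a b c := fun a b c => pmass_nonneg hp _ _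
  have h1 : pH p (fun t => (f t, g t, h t)) = ∑ a, ∑ b, ∑ c, negMulLog (q a b c) := by
    rw [pH, Fintype.sum_prod_type]
    exact Finset.sum_congr rfl fun a _ => Fintype.sum_prod_type _
  have hpair : ∀ a b, pmass p (fun t => (f t, g t)) (a, b) = ∑ c, q a b c := by
    intro a b
    rw [pmass_pair_right p (fun t => (f t, g t)) h (a, b)]
    refine Finset.sum_congr rfl fun c _ => ?_
    exact pmass_iff p _ _ _ _ (fun t => by simp [Prod.ext_iff, and_assoc])
  have h2 : pH p (fun t => (f t, g t)) = ∑ a, ∑ b, negMulLog (∑ c, q a b c) := by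
    rw [pH, Fintype.sum_prod_type]
    exact Finset.sum_congr rfl fun a _ => Finset.sum_congr rfl fun b _ => by rw [hpair]
  have hgh : ∀ b c, pmass p (fun t => (g t, h t)) (b, c) = ∑ a, q a b c := by
    intro b c
    rw [pmass_pair_left p f (fun t => (g t, h t)) (b, c)]
  have h3 : pH p (fun t => (g t, h t)) = ∑ b, ∑ c, negMulLog (∑ a, q a b c) := by
    rw [pH, Fintype.sum_prod_type]
    exact Finset.sum_congr rfl fun b _ => Finset.sum_congr rfl fun c _ => by rw [hgh]
  have h4 : pH p g = ∑ b, negMulLog (∑ a, ∑ c, q a b c) := by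
    rw [pH]
    refine Finset.sum_congr rfl fun b _ => ?_
    have : pmass p g b = ∑ a, ∑ c, q a b c := by
      rw [pmass_pair_left p f g b]
      refine Finset.sum_congr rfl fun a _ => ?_
      rw [pmass_pair_right p (fun t => (f t, g t)) h (a, b)]
      refine Finset.sum_congr rfl fun c _ => ?_
      exact pmass_iff p _ _ _ _ (fun t => by simp [Prod.ext_iff, and_assoc])
    rw [this]
  rw [h1, h2, h3, h4]
  exact cmi_pure q hq

end PurePMF

section Shearer

lemma shearer_submod {ι κ : Type*} [DecidableEq ι]
    (f : Finset ι → ℝ)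
    (hempty : f ∅ = 0)
    (hmono : ∀ A B : Finset ι, A ⊆ B → f A ≤ f B)
    (hsub : ∀ A B : Finset ι, f (A ∪ B) + f (A ∩ B) ≤ f A + f B)
    (A : Finset κ) (g : κ → ℝ) (hg : ∀ a ∈ A, 0 ≤ g a) :
    ∀ U : Finset ι, ∀ Vm : κ → Finset ι,
      (∀ i ∈ U, 1 ≤ ∑ a ∈ A.filter (fun a => i ∈ Vm a), g a) →
      f U ≤ ∑ a ∈ A, g a * f (Vm a) := by
  intro U
  induction U using Finset.strongInduction with
  | _ U IH =>
    intro Vm hcov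
    rcases U.eq_empty_or_nonempty with rfl | ⟨i, hi⟩
    · rw [hempty]
      exact Finset.sum_nonneg fun a ha => mul_nonneg (hg a ha)
        (hempty ▸ hmono ∅ (Vm a) (Finset.empty_subset _))
    · set U' := U.erase i with hU'
      have hss : U' ⊂ U := Finset.erase_ssubset hi
      have hIH : f U' ≤ ∑ a ∈ A, g a * f (Vm a ∩ U') := by
        refine IH U' hss (fun a => Vm a ∩ U') (fun j hj => ?_)
        have heq : A.filter (fun a => j ∈ Vm a ∩ U') = A.filter (fun a => j ∈ Vm a) := by
          refine Finset.filter_congr fun a _ => ?_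
          simp [Finset.mem_inter, hj]
        rw [heq]
        exact hcov j (Finset.mem_of_mem_erase hj)
      have hUU' : f U' ≤ f U := hmono _ _ (Finset.erase_subset _ _)
      have key : ∀ a ∈ A,
          g a * (f (Vm a ∩ U') + (if i ∈ Vm a then f U - f U' else 0)) ≤ g a * f (Vm a) := by
        intro a ha
        refine mul_le_mul_of_nonneg_left ?_ (hg a ha)
        by_cases h : i ∈ Vm a
        · simp only [if_pos h]
          have h1 := hsub (Vm a) U'
          have h2 : f U ≤ f (Vm a ∪ U') := by
            refine hmono _ _ fun j hj => ?_
            by_cases hji : j = i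
            · subst hji; exact Finset.mem_union_left _ h
            · exact Finset.mem_union_right _ (Finset.mem_erase.mpr ⟨hji, hj⟩)
          linarith
        · simp only [if_neg h, add_zero]
          exact hmono _ _ Finset.inter_subset_left
      have hsum := Finset.sum_le_sum key
      have hsplit : ∑ a ∈ A, g a * (f (Vm a ∩ U') + (if i ∈ Vm a then f U - f U' else 0))
          = (∑ a ∈ A, g a * f (Vm a ∩ U'))
            + (∑ a ∈ A.filter (fun a => i ∈ Vm a), g a) * (f U - f U') := by
        simp_rw [mul_add, Finset.sum_add_distrib, mul_ite, mul_zero]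
        rw [Finset.sum_ite, Finset.sum_const_zero, add_zero, ← Finset.sum_mul]
      have hcov' : 1 * (f U - f U') ≤
          (∑ a ∈ A.filter (fun a => i ∈ Vm a), g a) * (f U - f U') :=
        mul_le_mul_of_nonneg_right (hcov i hi) (by linarith)
      rw [hsplit] at hsum
      linarith

end Shearer

section MeasurePart
open MeasureTheory

variable {Ω : Type*} [MeasurableSpace Ω] (μ : Measure Ω) [IsProbabilityMeasure μ]
variable {T : Type*} [Fintype T] (W : Ω → T)

lemma entH_comp_pH (hW : ∀ t, MeasurableSet (W ⁻¹' {t})) {A : Type*} [Fintype A] (φ : T → A) :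
    entH μ (fun ω => φ (W ω)) = pH (fun t => (μ (W ⁻¹' {t})).toReal) φ := by
  unfold entH pH pmass
  refine Finset.sum_congr rfl fun a _ => ?_
  congr 1
  have hset : (fun ω => φ (W ω)) ⁻¹' {a}
      = ⋃ t ∈ (univ.filter (fun t => φ t = a) : Finset T), W ⁻¹' {t} := by
    ext ω; simp
  have hd : (↑(univ.filter (fun t => φ t = a) : Finset T) : Set T).PairwiseDisjoint
      (fun t => W ⁻¹' {t}) := by
    intro t _ t' _ hne
    exact Set.disjoint_left.mpr fun ω h1 h2 => hne (by
      simp only [Set.mem_preimage, Set.mem_singleton_iff] at h1 h2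
      rw [← h1, ← h2])
  rw [hset, measure_biUnion_finset hd (fun t _ => hW t), ENNReal.toReal_sum
    (fun t _ => measure_ne_top μ _)]

end MeasurePart

/-- **Chain form of the Madiman–Tetali inequality** (Corollary 1). -/
theorem madiman_tetali_chain
    {Ω : Type*} [MeasurableSpace Ω] (μ : Measure Ω) [IsProbabilityMeasure μ]
    {ι : Type*} [Fintype ι] [DecidableEq ι]
    {S : ι → Type*} [∀ i, Fintype (S i)] [∀ i, MeasurableSpace (S i)]
    [∀ i, MeasurableSingletonClass (S i)]
    (X : ∀ i, Ω → S i) (hX : ∀ i, Measurable (X i))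
    (M : ℕ) (hM : 1 ≤ M) (Sig : ℕ → Finset (Finset ι))
    (hdisj : ∀ a ∈ Finset.Icc 1 M, ∀ b ∈ Finset.Icc 1 M, a ≠ b → Disjoint (Sig a) (Sig b))
    (c : Finset ι → ℝ)
    (hc0 : ∀ β ∈ Finset.Icc 1 M, ∀ U ∈ Sig β, 0 ≤ c U)
    (α : ℕ) (hα1 : 2 ≤ α) (hα2 : α ≤ M)
    (g : Finset ι → Finset ι → ℝ)
    (hg0 : ∀ U ∈ Sig α, ∀ V ∈ (Sig (α - 1)).filter (fun V => V ⊆ U), 0 ≤ g U V)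
    (hgcov : ∀ U ∈ Sig α, ∀ i ∈ U,
      1 ≤ ∑ V ∈ (Sig (α - 1)).filter (fun V => V ⊆ U ∧ i ∈ V), g U V)
    (hc : ∀ V ∈ Sig (α - 1), c V = ∑ U ∈ (Sig α).filter (fun U => V ⊆ U), g U V * c U) :
    ∑ V ∈ Sig (α - 1), c V * entHset μ X V ≥ ∑ U ∈ Sig α, c U * entHset μ X U := by
  classical
  -- the full joint random variable
  set W : Ω → ∀ i, S i := fun ω i => X i ω with hWdef
  have hWm : ∀ t : (∀ i, S i), MeasurableSet (W ⁻¹' {t}) := by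
    intro t
    have hset : W ⁻¹' {t} = ⋂ i, X i ⁻¹' {t i} := by
      ext ω
      simp [hWdef, funext_iff]
    rw [hset]
    exact MeasurableSet.iInter fun i => hX i (measurableSet_singleton _)
  set p : (∀ i, S i) → ℝ := fun t => (μ (W ⁻¹' {t})).toReal with hpdef
  have hp0 : ∀ t, 0 ≤ p t := fun t => ENNReal.toReal_nonneg
  have hH : ∀ A : Finset ι, entHset μ X A = pH p (fun t (i : A) => t i.1) := by
    intro A
    exact entH_comp_pH μ W hWm (fun t (i : A) => t i.1)
  -- the entropy set function is zero at ∅, monotone, submodular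
  have hempty : entHset μ X (∅ : Finset ι) = 0 := by
    have hpre : ∀ s : ((i : (∅ : Finset ι)) → S i), (jointOn X ∅) ⁻¹' {s} = Set.univ := by
      intro s
      refine Set.eq_univ_of_forall fun ω => ?_
      simp only [Set.mem_preimage, Set.mem_singleton_iff]
      funext i
      exact absurd i.2 (Finset.notMem_empty _)
    unfold entHset entH
    rw [Finset.sum_congr rfl (fun s _ => by rw [hpre s, measure_univ, ENNReal.toReal_one,
      Real.negMulLog_one])]
    simp
  have hmono : ∀ A B : Finset ι, A ⊆ B → entHset μ X A ≤ entHset μ X B := by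
    intro A B hAB
    rw [hH A, hH B]
    have : (fun (t : ∀ i, S i) (i : A) => t i.1)
        = fun (t : ∀ i, S i) => (fun (x : (i : B) → S i.1) (i : A) => x ⟨i.1, hAB i.2⟩)
            ((fun (t : ∀ i, S i) (i : B) => t i.1) t) := rfl
    rw [this]
    exact pH_comp_le p hp0 (fun (x : (i : B) → S i.1) (i : A) => x ⟨i.1, hAB i.2⟩)
      (fun (t : ∀ i, S i) (i : B) => t i.1)
  have hsubmod : ∀ A B : Finset ι,
      entHset μ X (A ∪ B) + entHset μ X (A ∩ B) ≤ entHset μ X A + entHset μ X B := by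
    intro A B
    rw [hH (A ∪ B), hH (A ∩ B), hH A, hH B]
    set ρA : (∀ i, S i) → ((i : A) → S i.1) := fun t i => t i.1 with hρA
    set ρI : (∀ i, S i) → ((i : ↥(A ∩ B)) → S i.1) := fun t i => t i.1 with hρI
    set ρB : (∀ i, S i) → ((i : B) → S i.1) := fun t i => t i.1 with hρB
    have hsub := pH_submod p hp0 ρA ρI ρB
    have hA : pH p (fun t => (ρA t, ρI t)) ≤ pH p ρA := by
      have : (fun t => (ρA t, ρI t))
          = fun t => (fun x : (i : A) → S i.1 =>
              (x, fun i : ↥(A ∩ B) =>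
                x ⟨i.1, (Finset.mem_inter.mp i.2).1⟩)) (ρA t) := rfl
      rw [this]
      exact pH_comp_le p hp0 (fun x : (i : A) → S i.1 =>
        (x, fun i : ↥(A ∩ B) => x ⟨i.1, (Finset.mem_inter.mp i.2).1⟩)) ρA
    have hB : pH p (fun t => (ρI t, ρB t)) ≤ pH p ρB := by
      have : (fun t => (ρI t, ρB t))
          = fun t => (fun x : (i : B) → S i.1 =>
              ((fun i : ↥(A ∩ B) =>
                x ⟨i.1, (Finset.mem_inter.mp i.2).2⟩), x)) (ρB t) := rfl
      rw [this]
      exact pH_comp_le p hp0 (fun x : (i : B) → S i.1 =>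
        ((fun i : ↥(A ∩ B) => x ⟨i.1, (Finset.mem_inter.mp i.2).2⟩), x)) ρB
    have hU : pH p (fun (t : ∀ i, S i) (i : ↥(A ∪ B)) => t i.1)
        ≤ pH p (fun t => (ρA t, ρI t, ρB t)) := by
      have : (fun (t : ∀ i, S i) (i : ↥(A ∪ B)) => t i.1)
          = fun t => (fun (x : ((i : A) → S i.1) × ((i : ↥(A ∩ B)) → S i.1) × ((i : B) → S i.1))
              (i : ↥(A ∪ B)) =>
                (if h : i.1 ∈ A then x.1 ⟨i.1, h⟩
                else x.2.2 ⟨i.1, (Finset.mem_union.mp i.2).resolve_left h⟩ : S i.1))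
              ((fun (t : ∀ i, S i) => (ρA t, ρI t, ρB t)) t) := by
        funext t
        funext i
        dsimp only [hρA, hρB]
        split <;> rfl
      rw [this]
      exact pH_comp_le p hp0 (fun (x : ((i : A) → S i.1) × ((i : ↥(A ∩ B)) → S i.1) × ((i : B) → S i.1))
          (i : ↥(A ∪ B)) =>
            (if h : i.1 ∈ A then x.1 ⟨i.1, h⟩
            else x.2.2 ⟨i.1, (Finset.mem_union.mp i.2).resolve_left h⟩ : S i.1))
        (fun t => (ρA t, ρI t, ρB t))
    have hIeq : pH p (fun (t : ∀ i, S i) (i : ↥(A ∩ B)) => t i.1) = pH p ρI := rfl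
    rw [hIeq]
    linarith
  -- Shearer step for each U
  have hα : α ∈ Finset.Icc 1 M := Finset.mem_Icc.mpr ⟨by omega, hα2⟩
  have step1 : ∀ U ∈ Sig α, entHset μ X U
      ≤ ∑ V ∈ (Sig (α - 1)).filter (fun V => V ⊆ U), g U V * entHset μ X V := by
    intro U hU
    refine shearer_submod (entHset μ X) hempty hmono hsubmod
      ((Sig (α - 1)).filter (fun V => V ⊆ U)) (g U) (hg0 U hU) U (fun V => V) ?_
    intro i hiU
    have h1 := hgcov U hU i hiU
    have h2 : ((Sig (α - 1)).filter (fun V => V ⊆ U)).filter (fun V => i ∈ V)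
        = (Sig (α - 1)).filter (fun V => V ⊆ U ∧ i ∈ V) := by
      rw [Finset.filter_filter]
    rw [h2]
    exact h1
  have hcU : ∀ U ∈ Sig α, 0 ≤ c U := hc0 α hα
  have step2 : ∑ U ∈ Sig α, c U * entHset μ X U
      ≤ ∑ U ∈ Sig α, ∑ V ∈ (Sig (α - 1)).filter (fun V => V ⊆ U),
          c U * (g U V * entHset μ X V) := by
    refine Finset.sum_le_sum fun U hU => ?_
    rw [← Finset.mul_sum]
    exact mul_le_mul_of_nonneg_left (step1 U hU) (hcU U hU)
  have hswap : ∑ U ∈ Sig α, ∑ V ∈ (Sig (α - 1)).filter (fun V => V ⊆ U),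
        c U * (g U V * entHset μ X V)
      = ∑ V ∈ Sig (α - 1), ∑ U ∈ (Sig α).filter (fun U => V ⊆ U),
          c U * (g U V * entHset μ X V) := by
    simp_rw [Finset.sum_filter]
    exact Finset.sum_comm
  have hfinal : ∀ V ∈ Sig (α - 1),
      ∑ U ∈ (Sig α).filter (fun U => V ⊆ U), c U * (g U V * entHset μ X V)
        = c V * entHset μ X V := by
    intro V hV
    rw [hc V hV, Finset.sum_mul]
    exact Finset.sum_congr rfl fun U _ => by ring
  rw [ge_iff_le]
  calc ∑ U ∈ Sig α, c U * entHset μ X U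
      ≤ ∑ U ∈ Sig α, ∑ V ∈ (Sig (α - 1)).filter (fun V => V ⊆ U),
          c U * (g U V * entHset μ X V) := step2
    _ = ∑ V ∈ Sig (α - 1), ∑ U ∈ (Sig α).filter (fun U => V ⊆ U),
          c U * (g U V * entHset μ X V) := hswap
    _ = ∑ V ∈ Sig (α - 1), c V * entHset μ X V := Finset.sum_congr rfl hfinal
end

section
/- Conditional chain form of the Madiman–Tetali inequality (Proposition 1): Let Σ be a finite ground set, M a positive integer, and Σ^{(1)},…,Σ^{(M)} mutually exclusive collections of subsets of Σ; for U ∈ Σ^{(α)} let 𝒱_U := {V ∈ Σ^{(α−1)} : V ⊆ U} and for V ∈ Σ^{(α−1)} let 𝒰_V := {U ∈ Σ^{(α)} : U ⊇ V}. For each U ∈ Σ^{(M)} let 𝒜_U be a collection of subsets of Σ, and for α = M−1 down to 1 define 𝒜_V := ∪_{U ∈ 𝒰_V} 𝒜_U for V ∈ Σ^{(α)}. For each U ∈ ∪_{α=1}^{M} Σ^{(α)} let s(U,·) : 𝒜_U → ℝ≥0. Fix α ∈ {2,…,M}. If there exists a collection of functions {g_U : U ∈ Σ^{(α)}} such that each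 g_U is a fractional cover of (U, 𝒱_U) and s(V,A) = ∑_{U ∈ 𝒰_V : 𝒜_U ∋ A} g_U(V) s(U,A) for every V ∈ Σ^{(α−1)} and A ∈ 𝒜_V, then ∑_{V ∈ Σ^{(α−1)}} ∑_{A ∈ 𝒜_V} s(V,A) H(X_V | X_A) ≥ ∑_{U ∈ Σ^{(α)}} ∑_{A ∈ 𝒜_U} s(U,A) H(X_U | X_A) for any jointly distributed random variables X_Σ = (X_i : i ∈ Σ) each taking values in a finite set. -/
open MeasureTheory ProbabilityTheory

set_option linter.unusedSectionVars false
set_option linter.unusedVariables false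
set_option maxHeartbeats 1000000



lemma negMulLog_add_le' {a b : ℝ} (ha : 0 ≤ a) (hb : 0 ≤ b) :
    Real.negMulLog (a + b) ≤ Real.negMulLog a + Real.negMulLog b := by
  have h1 : a * Real.log a ≤ a * Real.log (a + b) := by
    rcases eq_or_lt_of_le ha with h | h
    · simp [← h]
    · exact mul_le_mul_of_nonneg_left (Real.log_le_log h (by linarith)) ha
  have h2 : b * Real.log b ≤ b * Real.log (a + b) := by
    rcases eq_or_lt_of_le hb with h | h
    · simp [← h]
    · exact mul_le_mul_of_nonneg_left (Real.log_le_log h (by linarith)) hb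
  simp only [Real.negMulLog, neg_mul]
  nlinarith [h1, h2]

lemma sum_negMulLog_le' {τ : Type*} (F : Finset τ) (f : τ → ℝ) (hf : ∀ a ∈ F, 0 ≤ f a) :
    Real.negMulLog (∑ a ∈ F, f a) ≤ ∑ a ∈ F, Real.negMulLog (f a) := by
  induction F using Finset.cons_induction with
  | empty => simp
  | cons a F ha ih =>
    rw [Finset.sum_cons, Finset.sum_cons]
    have h0 : 0 ≤ ∑ x ∈ F, f x :=
      Finset.sum_nonneg fun x hx => hf x (Finset.mem_cons_of_mem hx)
    calc Real.negMulLog (f a + ∑ x ∈ F, f x)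
        ≤ Real.negMulLog (f a) + Real.negMulLog (∑ x ∈ F, f x) :=
          negMulLog_add_le' (hf a (Finset.mem_cons_self a F)) h0
      _ ≤ Real.negMulLog (f a) + ∑ x ∈ F, Real.negMulLog (f x) := by
          have := ih fun x hx => hf x (Finset.mem_cons_of_mem hx)
          linarith

lemma key_pt' {q a b c : ℝ} (hq : 0 ≤ q) (hqa : q ≤ a) (hqb : q ≤ b) (hac : a ≤ c) :
    q - a * b / c ≤ q * (Real.log q + Real.log c - Real.log a - Real.log b) := by
  rcases eq_or_lt_of_le hq with h | h
  · have ha : 0 ≤ a := le_trans hq hqa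
    have hb : 0 ≤ b := le_trans hq hqb
    have hc : 0 ≤ c := le_trans ha hac
    have : 0 ≤ a * b / c := div_nonneg (mul_nonneg ha hb) hc
    simp [← h]
    linarith
  · have ha : 0 < a := lt_of_lt_of_le h hqa
    have hb : 0 < b := lt_of_lt_of_le h hqb
    have hc : 0 < c := lt_of_lt_of_le ha hac
    have hx : 0 < a * b / (q * c) := by positivity
    have hlog : Real.log (a * b / (q * c)) ≤ a * b / (q * c) - 1 :=
      Real.log_le_sub_one_of_pos hx
    have hexp : Real.log (a * b / (q * c)) =
        Real.log a + Real.log b - Real.log q - Real.log c := by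
      rw [Real.log_div (by positivity) (by positivity), Real.log_mul (ne_of_gt ha) (ne_of_gt hb),
        Real.log_mul (ne_of_gt h) (ne_of_gt hc)]
      ring
    have key : q * (Real.log q + Real.log c - Real.log a - Real.log b) ≥
        q * (1 - a * b / (q * c)) := by
      have := mul_le_mul_of_nonneg_left (hexp ▸ hlog) (le_of_lt h)
      nlinarith [this]
    have heq : q * (1 - a * b / (q * c)) = q - a * b / c := by
      field_simp
    linarith [heq ▸ key]

section Prob

variable {Ω : Type*} [MeasurableSpace Ω] (μ : Measure Ω) [IsProbabilityMeasure μ]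

noncomputable def pr {S : Type*} (X : Ω → S) (s : S) : ℝ := (μ (X ⁻¹' {s})).toReal

lemma pr_nonneg {S : Type*} (X : Ω → S) (s : S) : 0 ≤ pr μ X s := ENNReal.toReal_nonneg

lemma entH_eq_pr {S : Type*} [Fintype S] (X : Ω → S) :
    entH μ X = ∑ s : S, Real.negMulLog (pr μ X s) := rfl

lemma pr_comp {S T : Type*} [Fintype S] [DecidableEq T] (X : Ω → S)
    (hX : ∀ s, MeasurableSet (X ⁻¹' {s})) (f : S → T) (t : T) :
    pr μ (fun ω => f (X ω)) t = ∑ s ∈ Finset.univ.filter (fun s => f s = t), pr μ X s := by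
  have hset : (fun ω => f (X ω)) ⁻¹' {t} =
      ⋃ s ∈ Finset.univ.filter (fun s => f s = t), X ⁻¹' {s} := by
    ext ω
    simp only [Set.mem_preimage, Set.mem_singleton_iff, Set.mem_iUnion, Finset.mem_filter,
      Finset.mem_univ, true_and]
    constructor
    · intro h; exact ⟨X ω, h, rfl⟩
    · rintro ⟨s, hs, h⟩; rw [h]; exact hs
  have hdisj : (↑(Finset.univ.filter (fun s => f s = t)) : Set S).PairwiseDisjoint
      (fun s => X ⁻¹' {s}) := by
    intro u _ v _ huv
    simp only [Function.onFun, Set.disjoint_left]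
    intro ω h1 h2
    simp only [Set.mem_preimage, Set.mem_singleton_iff] at h1 h2
    exact huv (h1 ▸ h2 ▸ rfl)
  have hmeas : μ ((fun ω => f (X ω)) ⁻¹' {t}) =
      ∑ s ∈ Finset.univ.filter (fun s => f s = t), μ (X ⁻¹' {s}) := by
    rw [hset, measure_biUnion_finset hdisj (fun s _ => hX s)]
  unfold pr
  rw [hmeas, ENNReal.toReal_sum (fun s _ => measure_ne_top μ _)]

lemma sum_pr_eq_one {S : Type*} [Fintype S] (X : Ω → S)
    (hX : ∀ s, MeasurableSet (X ⁻¹' {s})) :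
    ∑ s : S, pr μ X s = 1 := by
  classical
  have hset : (Set.univ : Set Ω) = ⋃ s ∈ (Finset.univ : Finset S), X ⁻¹' {s} := by
    ext ω
    simp only [Set.mem_univ, true_iff, Set.mem_iUnion, Finset.mem_univ, Set.mem_preimage,
      Set.mem_singleton_iff]
    exact ⟨X ω, trivial, rfl⟩
  have hdisj : (↑(Finset.univ : Finset S) : Set S).PairwiseDisjoint (fun s => X ⁻¹' {s}) := by
    intro u _ v _ huv
    simp only [Function.onFun, Set.disjoint_left]
    intro ω h1 h2
    simp only [Set.mem_preimage, Set.mem_singleton_iff] at h1 h2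
    exact huv (h1 ▸ h2 ▸ rfl)
  have : μ (Set.univ : Set Ω) = ∑ s : S, μ (X ⁻¹' {s}) := by
    rw [hset, measure_biUnion_finset hdisj (fun s _ => hX s)]
  unfold pr
  rw [← ENNReal.toReal_sum (fun s _ => measure_ne_top μ _), ← this, measure_univ,
    ENNReal.toReal_one]

end Prob

section Prob2
variable {Ω : Type*} [MeasurableSpace Ω] (μ : Measure Ω) [IsProbabilityMeasure μ]
variable {S T V : Type*} [Fintype S] [Fintype T] [Fintype V]
  [DecidableEq S] [DecidableEq T] [DecidableEq V]

lemma meas_fibers_pair (X : Ω → S) (Y : Ω → T)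
    (hX : ∀ s, MeasurableSet (X ⁻¹' {s})) (hY : ∀ t, MeasurableSet (Y ⁻¹' {t})) :
    ∀ p : S × T, MeasurableSet ((fun ω => (X ω, Y ω)) ⁻¹' {p}) := by
  intro p
  have : (fun ω => (X ω, Y ω)) ⁻¹' {p} = X ⁻¹' {p.1} ∩ Y ⁻¹' {p.2} := by
    ext ω
    simp [Prod.ext_iff]
  rw [this]
  exact (hX p.1).inter (hY p.2)

lemma meas_fibers_triple (X : Ω → S) (Y : Ω → T) (Z : Ω → V)
    (hX : ∀ s, MeasurableSet (X ⁻¹' {s})) (hY : ∀ t, MeasurableSet (Y ⁻¹' {t}))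
    (hZ : ∀ v, MeasurableSet (Z ⁻¹' {v})) :
    ∀ p : S × T × V, MeasurableSet ((fun ω => (X ω, Y ω, Z ω)) ⁻¹' {p}) :=
  meas_fibers_pair X (fun ω => (Y ω, Z ω)) hX (meas_fibers_pair Y Z hY hZ)

lemma marg_snd (X : Ω → S) (Y : Ω → T)
    (hX : ∀ s, MeasurableSet (X ⁻¹' {s})) (hY : ∀ t, MeasurableSet (Y ⁻¹' {t})) (y : T) :
    pr μ Y y = ∑ x : S, pr μ (fun ω => (X ω, Y ω)) (x, y) := by
  have h := pr_comp μ (fun ω => (X ω, Y ω)) (meas_fibers_pair X Y hX hY) Prod.snd y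
  have h2 : pr μ (fun ω => Prod.snd ((fun ω => (X ω, Y ω)) ω)) y = pr μ Y y := rfl
  rw [h2] at h
  rw [h, Finset.sum_filter, Fintype.sum_prod_type]
  refine Finset.sum_congr rfl fun x _ => ?_
  simp [Finset.sum_ite_eq']

lemma entH_le_pair (X : Ω → S) (Y : Ω → T)
    (hX : ∀ s, MeasurableSet (X ⁻¹' {s})) (hY : ∀ t, MeasurableSet (Y ⁻¹' {t})) :
    entH μ Y ≤ entH μ (fun ω => (X ω, Y ω)) := by
  rw [entH_eq_pr μ, entH_eq_pr μ]
  have hrhs : ∑ p : S × T, Real.negMulLog (pr μ (fun ω => (X ω, Y ω)) p)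
      = ∑ y : T, ∑ x : S, Real.negMulLog (pr μ (fun ω => (X ω, Y ω)) (x, y)) := by
    rw [Fintype.sum_prod_type]
    exact Finset.sum_comm
  rw [hrhs]
  refine Finset.sum_le_sum fun y _ => ?_
  rw [marg_snd μ X Y hX hY y]
  exact sum_negMulLog_le' _ _ fun x _ => pr_nonneg μ _ _



end Prob2

section Submod
variable {Ω : Type*} [MeasurableSpace Ω] (μ : Measure Ω) [IsProbabilityMeasure μ]
variable {S T V : Type*} [Fintype S] [Fintype T] [Fintype V]
  [DecidableEq S] [DecidableEq T] [DecidableEq V]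

lemma marg_fst_thd (X : Ω → S) (Y : Ω → T) (Z : Ω → V)
    (hX : ∀ s, MeasurableSet (X ⁻¹' {s})) (hY : ∀ t, MeasurableSet (Y ⁻¹' {t}))
    (hZ : ∀ v, MeasurableSet (Z ⁻¹' {v})) (x : S) (z : V) :
    pr μ (fun ω => (X ω, Z ω)) (x, z) =
      ∑ y : T, pr μ (fun ω => (X ω, Y ω, Z ω)) (x, y, z) := by
  have h := pr_comp μ (fun ω => (X ω, Y ω, Z ω)) (meas_fibers_triple X Y Z hX hY hZ)
    (fun p => (p.1, p.2.2)) (x, z)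
  have h2 : pr μ (fun ω => ((fun (p : S × T × V) => (p.1, p.2.2)) ((fun ω => (X ω, Y ω, Z ω)) ω)))
      (x, z) = pr μ (fun ω => (X ω, Z ω)) (x, z) := rfl
  rw [h2] at h
  rw [h]
  refine Finset.sum_nbij' (fun p => p.2.1) (fun y => (x, y, z)) ?_ ?_ ?_ ?_ ?_
  · intro a _; exact Finset.mem_univ _
  · intro y _
    simp
  · intro a ha
    simp only [Finset.mem_filter, Finset.mem_univ, true_and, Prod.mk.injEq] at ha
    obtain ⟨h1, h3⟩ := ha
    ext <;> simp [h1, h3]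
  · intro y _; rfl
  · intro a ha
    simp only [Finset.mem_filter, Finset.mem_univ, true_and, Prod.mk.injEq] at ha
    obtain ⟨h1, h3⟩ := ha
    congr 1
    ext <;> simp [h1, h3]

lemma marg_snd2 (X : Ω → S) (Y : Ω → T) (Z : Ω → V)
    (hX : ∀ s, MeasurableSet (X ⁻¹' {s})) (hY : ∀ t, MeasurableSet (Y ⁻¹' {t}))
    (hZ : ∀ v, MeasurableSet (Z ⁻¹' {v})) (y : T) (z : V) :
    pr μ (fun ω => (Y ω, Z ω)) (y, z) =
      ∑ x : S, pr μ (fun ω => (X ω, Y ω, Z ω)) (x, y, z) := by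
  have h := pr_comp μ (fun ω => (X ω, Y ω, Z ω)) (meas_fibers_triple X Y Z hX hY hZ)
    Prod.snd (y, z)
  have h2 : pr μ (fun ω => Prod.snd ((fun ω => (X ω, Y ω, Z ω)) ω))
      (y, z) = pr μ (fun ω => (Y ω, Z ω)) (y, z) := rfl
  rw [h2] at h
  rw [h]
  refine Finset.sum_nbij' (fun p => p.1) (fun x => (x, y, z)) ?_ ?_ ?_ ?_ ?_
  · intro a _; exact Finset.mem_univ _
  · intro x _
    simp
  · intro a ha
    simp only [Finset.mem_filter, Finset.mem_univ, true_and] at ha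
    ext <;> simp [ha]
  · intro x _; rfl
  · intro a ha
    simp only [Finset.mem_filter, Finset.mem_univ, true_and] at ha
    congr 1
    ext <;> simp [ha]

lemma entH_submod (X : Ω → S) (Y : Ω → T) (Z : Ω → V)
    (hX : ∀ s, MeasurableSet (X ⁻¹' {s})) (hY : ∀ t, MeasurableSet (Y ⁻¹' {t}))
    (hZ : ∀ v, MeasurableSet (Z ⁻¹' {v})) :
    entH μ (fun ω => (X ω, Y ω, Z ω)) + entH μ Z ≤
      entH μ (fun ω => (X ω, Z ω)) + entH μ (fun ω => (Y ω, Z ω)) := by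
  set q : S → T → V → ℝ := fun x y z => pr μ (fun ω => (X ω, Y ω, Z ω)) (x, y, z) with hqdef
  set a : S → V → ℝ := fun x z => pr μ (fun ω => (X ω, Z ω)) (x, z) with hadef
  set b : T → V → ℝ := fun y z => pr μ (fun ω => (Y ω, Z ω)) (y, z) with hbdef
  set c : V → ℝ := fun z => pr μ Z z with hcdef
  have hq0 : ∀ x y z, 0 ≤ q x y z := fun x y z => pr_nonneg μ _ _
  have ha : ∀ x z, a x z = ∑ y, q x y z := fun x z => marg_fst_thd μ X Y Z hX hY hZ x z
  have hb : ∀ y z, b y z = ∑ x, q x y z := fun y z => marg_snd2 μ X Y Z hX hY hZ y z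
  have hc : ∀ z, c z = ∑ x, a x z := fun z =>
    marg_snd μ X Z hX hZ z
  have hc2 : ∀ z, c z = ∑ y, b y z := fun z =>
    marg_snd μ Y Z hY hZ z
  have ha0 : ∀ x z, 0 ≤ a x z := fun x z => pr_nonneg μ _ _
  have hb0 : ∀ y z, 0 ≤ b y z := fun y z => pr_nonneg μ _ _
  have hc0 : ∀ z, 0 ≤ c z := fun z => pr_nonneg μ _ _
  have hqa : ∀ x y z, q x y z ≤ a x z := by
    intro x y z
    rw [ha]
    exact Finset.single_le_sum (fun y' _ => hq0 x y' z) (Finset.mem_univ y)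
  have hqb : ∀ x y z, q x y z ≤ b y z := by
    intro x y z
    rw [hb]
    exact Finset.single_le_sum (fun x' _ => hq0 x' y z) (Finset.mem_univ x)
  have hac : ∀ x z, a x z ≤ c z := by
    intro x z
    rw [hc]
    exact Finset.single_le_sum (fun x' _ => ha0 x' z) (Finset.mem_univ x)
  have hq1 : ∑ x, ∑ y, ∑ z, q x y z = 1 := by
    have := sum_pr_eq_one μ (fun ω => (X ω, Y ω, Z ω)) (meas_fibers_triple X Y Z hX hY hZ)
    rw [Fintype.sum_prod_type] at this
    simpa [Fintype.sum_prod_type] using this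
  have hc1 : ∑ z, c z = 1 := sum_pr_eq_one μ Z hZ
  -- entropy expansions
  have hET : entH μ (fun ω => (X ω, Y ω, Z ω)) = -∑ x, ∑ y, ∑ z, q x y z * Real.log (q x y z) := by
    rw [entH_eq_pr μ]
    rw [Fintype.sum_prod_type]
    simp only [Fintype.sum_prod_type, Real.negMulLog, neg_mul, Finset.sum_neg_distrib]
    rfl
  have hEXZ : entH μ (fun ω => (X ω, Z ω)) = -∑ x, ∑ y, ∑ z, q x y z * Real.log (a x z) := by
    rw [entH_eq_pr μ]
    rw [Fintype.sum_prod_type]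
    have : ∀ x, ∑ z, Real.negMulLog (a x z) = -∑ y, ∑ z, q x y z * Real.log (a x z) := by
      intro x
      calc ∑ z, Real.negMulLog (a x z)
          = ∑ z, ∑ y, -(q x y z * Real.log (a x z)) := by
            refine Finset.sum_congr rfl fun z _ => ?_
            rw [Real.negMulLog, neg_mul, ha x z, Finset.sum_mul, ← Finset.sum_neg_distrib]
        _ = ∑ y, ∑ z, -(q x y z * Real.log (a x z)) := Finset.sum_comm
        _ = -∑ y, ∑ z, q x y z * Real.log (a x z) := by
            simp [Finset.sum_neg_distrib]
    exact (Finset.sum_congr rfl fun x _ => this x).trans (Finset.sum_neg_distrib _)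
  have hEYZ : entH μ (fun ω => (Y ω, Z ω)) = -∑ x, ∑ y, ∑ z, q x y z * Real.log (b y z) := by
    rw [entH_eq_pr μ]
    rw [Fintype.sum_prod_type]
    have h1 : ∀ y, ∑ z, Real.negMulLog (b y z) = -∑ x, ∑ z, q x y z * Real.log (b y z) := by
      intro y
      calc ∑ z, Real.negMulLog (b y z)
          = ∑ z, ∑ x, -(q x y z * Real.log (b y z)) := by
            refine Finset.sum_congr rfl fun z _ => ?_
            rw [Real.negMulLog, neg_mul, hb y z, Finset.sum_mul, ← Finset.sum_neg_distrib]
        _ = ∑ x, ∑ z, -(q x y z * Real.log (b y z)) := Finset.sum_comm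
        _ = -∑ x, ∑ z, q x y z * Real.log (b y z) := by
            simp [Finset.sum_neg_distrib]
    refine (Finset.sum_congr rfl fun y _ => h1 y).trans ((Finset.sum_neg_distrib _).trans (neg_inj.mpr ?_))
    exact Finset.sum_comm
  have hEZ : entH μ Z = -∑ x, ∑ y, ∑ z, q x y z * Real.log (c z) := by
    rw [entH_eq_pr μ]
    have h1 : ∀ z, Real.negMulLog (c z) = -∑ x, ∑ y, q x y z * Real.log (c z) := by
      intro z
      rw [Real.negMulLog, neg_mul, neg_inj]
      have : c z = ∑ x, ∑ y, q x y z := by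
        rw [hc]
        exact Finset.sum_congr rfl fun x _ => ha x z
      rw [this, Finset.sum_mul]
      exact Finset.sum_congr rfl fun x _ => Finset.sum_mul _ _ _
    refine (Finset.sum_congr rfl fun z _ => h1 z).trans ((Finset.sum_neg_distrib _).trans (neg_inj.mpr ?_))
    rw [Finset.sum_comm]
    refine Finset.sum_congr rfl fun x _ => Finset.sum_comm
  -- pointwise bound and summation
  have hkey : ∀ x y z, q x y z - a x z * b y z / c z ≤
      q x y z * (Real.log (q x y z) + Real.log (c z) - Real.log (a x z) - Real.log (b y z)) :=
    fun x y z => key_pt' (hq0 x y z) (hqa x y z) (hqb x y z) (hac x z)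
  have habc : ∑ x, ∑ y, ∑ z, a x z * b y z / c z ≤ 1 := by
    have hcz : ∀ z, ∑ x, ∑ y, a x z * b y z / c z ≤ c z := by
      intro z
      have h1 : ∑ x, ∑ y, a x z * b y z / c z = (∑ x, a x z) * (∑ y, b y z) / c z := by
        rw [Finset.sum_mul, Finset.sum_div]
        refine Finset.sum_congr rfl fun x _ => ?_
        rw [Finset.mul_sum, Finset.sum_div]
      rw [h1, ← hc z, ← hc2 z]
      rcases eq_or_lt_of_le (hc0 z) with h | h
      · simp [← h]
      · rw [mul_div_assoc, div_self (ne_of_gt h), mul_one]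
    calc ∑ x, ∑ y, ∑ z, a x z * b y z / c z
        = ∑ x, ∑ z, ∑ y, a x z * b y z / c z :=
          Finset.sum_congr rfl fun x _ => Finset.sum_comm
      _ = ∑ z, ∑ x, ∑ y, a x z * b y z / c z := Finset.sum_comm
      _ ≤ ∑ z, c z := Finset.sum_le_sum fun z _ => hcz z
      _ = 1 := hc1
  have hD : 0 ≤ ∑ x, ∑ y, ∑ z, q x y z *
      (Real.log (q x y z) + Real.log (c z) - Real.log (a x z) - Real.log (b y z)) := by
    have hS1 : ∑ x, ∑ y, ∑ z, (q x y z - a x z * b y z / c z) ≤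
        ∑ x, ∑ y, ∑ z, q x y z *
          (Real.log (q x y z) + Real.log (c z) - Real.log (a x z) - Real.log (b y z)) := by
      refine Finset.sum_le_sum fun x _ => Finset.sum_le_sum fun y _ =>
        Finset.sum_le_sum fun z _ => hkey x y z
    have hS2 : ∑ x, ∑ y, ∑ z, (q x y z - a x z * b y z / c z) =
        (∑ x, ∑ y, ∑ z, q x y z) - ∑ x, ∑ y, ∑ z, a x z * b y z / c z := by
      simp only [Finset.sum_sub_distrib]
    rw [hS2, hq1] at hS1
    linarith
  have hexpand : ∑ x, ∑ y, ∑ z, q x y z *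
      (Real.log (q x y z) + Real.log (c z) - Real.log (a x z) - Real.log (b y z)) =
      (∑ x, ∑ y, ∑ z, q x y z * Real.log (q x y z)) +
      (∑ x, ∑ y, ∑ z, q x y z * Real.log (c z)) -
      (∑ x, ∑ y, ∑ z, q x y z * Real.log (a x z)) -
      (∑ x, ∑ y, ∑ z, q x y z * Real.log (b y z)) := by
    simp only [mul_add, mul_sub, Finset.sum_add_distrib, Finset.sum_sub_distrib]
  rw [hexpand] at hD
  rw [hET, hEZ, hEXZ, hEYZ]
  linarith

end Submod

section SetLayer

variable {Ω : Type*} [MeasurableSpace Ω] (μ : Measure Ω) [IsProbabilityMeasure μ]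
variable {ι : Type*} [Fintype ι] [DecidableEq ι] {S : ι → Type*} [∀ i, Fintype (S i)]
  [∀ i, MeasurableSpace (S i)] [∀ i, MeasurableSingletonClass (S i)]
variable (X : ∀ i, Ω → S i)

lemma entH_comp_inj {A B : Type*} [Fintype A] [Fintype B] (f : A → B)
    (hf : Function.Injective f) (W : Ω → A) :
    entH μ (fun ω => f (W ω)) = entH μ W := by
  classical
  unfold entH
  have hzero : ∀ b ∈ (Finset.univ : Finset B), b ∉ Finset.univ.image f →
      Real.negMulLog ((μ ((fun ω => f (W ω)) ⁻¹' {b})).toReal) = 0 := by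
    intro b _ hb
    have : (fun ω => f (W ω)) ⁻¹' {b} = ∅ := by
      ext ω
      simp only [Set.mem_preimage, Set.mem_singleton_iff, Set.mem_empty_iff_false, iff_false]
      intro h
      exact hb (Finset.mem_image.mpr ⟨W ω, Finset.mem_univ _, h⟩)
    simp [this]
  rw [← Finset.sum_subset (Finset.subset_univ (Finset.univ.image f)) hzero]
  rw [Finset.sum_image (fun a _ a' _ h => hf h)]
  refine Finset.sum_congr rfl fun a _ => ?_
  have : (fun ω => f (W ω)) ⁻¹' {f a} = W ⁻¹' {a} := by
    ext ω
    simp only [Set.mem_preimage, Set.mem_singleton_iff]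
    exact ⟨fun h => hf h, fun h => by rw [h]⟩
  rw [this]

lemma jointOn_fibers (hX : ∀ i, Measurable (X i)) (B : Finset ι) :
    ∀ v, MeasurableSet (jointOn X B ⁻¹' {v}) := by
  intro v
  have : jointOn X B ⁻¹' {v} = ⋂ i : B, (X i) ⁻¹' {v i} := by
    ext ω
    simp only [Set.mem_preimage, Set.mem_singleton_iff, Set.mem_iInter, jointOn, funext_iff]
  rw [this]
  exact MeasurableSet.iInter fun i => hX i (measurableSet_singleton _)

lemma entH_pair_jointOn (B C : Finset ι) :
    entH μ (fun ω => (jointOn X B ω, jointOn X C ω)) = entHset μ X (B ∪ C) := by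
  classical
  let f : ((i : (B ∪ C : Finset ι)) → S i) → ((i : B) → S i) × ((i : C) → S i) :=
    fun p => (fun i => p ⟨i.1, Finset.mem_union_left C i.2⟩,
              fun i => p ⟨i.1, Finset.mem_union_right B i.2⟩)
  have hf : Function.Injective f := by
    intro p q h
    funext i
    rcases Finset.mem_union.mp i.2 with h' | h'
    · exact congrFun (congrArg Prod.fst h) ⟨i.1, h'⟩
    · exact congrFun (congrArg Prod.snd h) ⟨i.1, h'⟩
  have : (fun ω => (jointOn X B ω, jointOn X C ω)) =
      fun ω => f (jointOn X (B ∪ C) ω) := rfl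
  rw [this, entH_comp_inj μ f hf (jointOn X (B ∪ C))]
  rfl

lemma entH_triple_jointOn (B C D : Finset ι) :
    entH μ (fun ω => (jointOn X B ω, jointOn X C ω, jointOn X D ω)) =
      entHset μ X (B ∪ (C ∪ D)) := by
  classical
  let f : ((i : (B ∪ (C ∪ D) : Finset ι)) → S i) →
      ((i : B) → S i) × ((i : C) → S i) × ((i : D) → S i) :=
    fun p => (fun i => p ⟨i.1, Finset.mem_union_left _ i.2⟩,
              fun i => p ⟨i.1, Finset.mem_union_right _ (Finset.mem_union_left _ i.2)⟩,
              fun i => p ⟨i.1, Finset.mem_union_right _ (Finset.mem_union_right _ i.2)⟩)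
  have hf : Function.Injective f := by
    intro p q h
    funext i
    rcases Finset.mem_union.mp i.2 with h' | h'
    · exact congrFun (congrArg Prod.fst h) ⟨i.1, h'⟩
    · rcases Finset.mem_union.mp h' with h'' | h''
      · exact congrFun (congrArg (fun r => r.2.1) h) ⟨i.1, h''⟩
      · exact congrFun (congrArg (fun r => r.2.2) h) ⟨i.1, h''⟩
  have : (fun ω => (jointOn X B ω, jointOn X C ω, jointOn X D ω)) =
      fun ω => f (jointOn X (B ∪ (C ∪ D)) ω) := rfl
  rw [this, entH_comp_inj μ f hf (jointOn X (B ∪ (C ∪ D)))]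
  rfl

lemma entHset_mono (hX : ∀ i, Measurable (X i)) {B C : Finset ι} (hBC : B ⊆ C) :
    entHset μ X B ≤ entHset μ X C := by
  classical
  have h := entH_le_pair μ (jointOn X C) (jointOn X B)
    (jointOn_fibers X hX C) (jointOn_fibers X hX B)
  rw [entH_pair_jointOn μ X C B, Finset.union_eq_left.mpr hBC] at h
  exact h

lemma entHset_submod (hX : ∀ i, Measurable (X i)) (P Q : Finset ι) :
    entHset μ X (P ∪ Q) + entHset μ X (P ∩ Q) ≤ entHset μ X P + entHset μ X Q := by
  classical
  have h := entH_submod μ (jointOn X P) (jointOn X Q) (jointOn X (P ∩ Q))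
    (jointOn_fibers X hX P) (jointOn_fibers X hX Q) (jointOn_fibers X hX (P ∩ Q))
  rw [entH_triple_jointOn μ X P Q (P ∩ Q), entH_pair_jointOn μ X P (P ∩ Q),
    entH_pair_jointOn μ X Q (P ∩ Q)] at h
  rw [show P ∪ (Q ∪ P ∩ Q) = P ∪ Q by
      rw [Finset.union_eq_left.mpr (Finset.inter_subset_right)],
    Finset.union_eq_left.mpr (Finset.inter_subset_left),
    Finset.union_eq_left.mpr (Finset.inter_subset_right)] at h
  exact h

end SetLayer

section Comb
variable {ι : Type*} [DecidableEq ι] (h : Finset ι → ℝ) (ord : ι → ℕ)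

lemma single_step (hsub : ∀ P Q, h (P ∪ Q) + h (P ∩ Q) ≤ h P + h Q)
    {B : Finset ι} {i j : ι} (hi : i ∉ B) (hj : j ∉ B) (hij : i ≠ j) :
    h (insert i (insert j B)) - h (insert j B) ≤ h (insert i B) - h B := by
  have hs := hsub (insert i B) (insert j B)
  have hu : insert i B ∪ insert j B = insert i (insert j B) := by
    ext x
    simp only [Finset.mem_union, Finset.mem_insert]
    tauto
  have hi2 : insert i B ∩ insert j B = B := by
    ext x
    simp only [Finset.mem_inter, Finset.mem_insert]
    constructor
    · rintro ⟨rfl | h1, h2⟩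
      · rcases h2 with rfl | h2
        · exact absurd rfl hij
        · exact absurd h2 hi
      · exact h1
    · intro hx; exact ⟨Or.inr hx, Or.inr hx⟩
  rw [hu, hi2] at hs
  linarith

lemma antitone_diff_aux (hsub : ∀ P Q, h (P ∪ Q) + h (P ∩ Q) ≤ h P + h Q)
    (D : Finset ι) : ∀ (B : Finset ι) (i : ι), i ∉ B → i ∉ D →
    h (insert i (B ∪ D)) - h (B ∪ D) ≤ h (insert i B) - h B := by
  induction D using Finset.induction_on with
  | empty => intro B i hiB _; simp
  | @insert j D hj ih =>
    intro B i hiB hiD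
    have hij : i ≠ j := fun e => hiD (e ▸ Finset.mem_insert_self j D)
    have hiD' : i ∉ D := fun e => hiD (Finset.mem_insert_of_mem e)
    by_cases hjB : j ∈ B
    · have : B ∪ insert j D = B ∪ D := by
        rw [Finset.union_insert, Finset.insert_eq_self.mpr (Finset.mem_union_left D hjB)]
      rw [this]
      exact ih B i hiB hiD'
    · rw [Finset.union_insert]
      have hjBD : j ∉ B ∪ D := by
        simp only [Finset.mem_union]
        rintro (h1 | h1)
        · exact hjB h1
        · exact hj h1
      have hiBD : i ∉ B ∪ D := by
        simp only [Finset.mem_union]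
        rintro (h1 | h1)
        · exact hiB h1
        · exact hiD' h1
      have h1 := single_step h hsub hiBD hjBD hij
      have h2 := ih B i hiB hiD'
      linarith

lemma antitone_diff (hsub : ∀ P Q, h (P ∪ Q) + h (P ∩ Q) ≤ h P + h Q)
    {B C : Finset ι} (hBC : B ⊆ C) {i : ι} (hi : i ∉ C) :
    h (insert i C) - h C ≤ h (insert i B) - h B := by
  have hC : C = B ∪ (C \ B) := (Finset.union_sdiff_of_subset hBC).symm
  rw [hC]
  exact antitone_diff_aux h hsub (C \ B) B i (fun e => hi (hBC e))
    (fun e => hi (Finset.sdiff_subset e))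

/-- `below V i` : elements of `V` coming strictly before `i` in the order `ord`. -/
def below (V : Finset ι) (i : ι) : Finset ι := V.filter (fun j => ord j < ord i)

lemma chain_rule (hord : Function.Injective ord) (V : Finset ι) : ∀ A : Finset ι,
    h (V ∪ A) - h A =
      ∑ i ∈ V, (h (insert i (below ord V i ∪ A)) - h (below ord V i ∪ A)) := by
  induction V using Finset.strongInduction with
  | _ V ih =>
    intro A
    rcases V.eq_empty_or_nonempty with rfl | hne
    · simp
    · obtain ⟨m, hm, hmax⟩ := V.exists_max_image ord hne
      have hbm : below ord V m = V.erase m := by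
        ext j
        simp only [below, Finset.mem_filter, Finset.mem_erase]
        constructor
        · rintro ⟨h1, h2⟩
          exact ⟨fun e => absurd (e ▸ h2) (lt_irrefl _), h1⟩
        · rintro ⟨h1, h2⟩
          exact ⟨h2, lt_of_le_of_ne (hmax j h2) (fun e => h1 (hord e))⟩
      have hbelow : ∀ i ∈ V.erase m, below ord (V.erase m) i = below ord V i := by
        intro i hi
        obtain ⟨him, hiV⟩ := Finset.mem_erase.mp hi
        have hordim : ord i < ord m := lt_of_le_of_ne (hmax i hiV) (fun e => him (hord e))
        ext j
        simp only [below, Finset.mem_filter, Finset.mem_erase]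
        constructor
        · rintro ⟨⟨_, h1⟩, h2⟩; exact ⟨h1, h2⟩
        · rintro ⟨h1, h2⟩
          exact ⟨⟨fun e => absurd (e ▸ h2) (by omega), h1⟩, h2⟩
      have hsum : ∑ i ∈ V, (h (insert i (below ord V i ∪ A)) - h (below ord V i ∪ A)) =
          (h (insert m (below ord V m ∪ A)) - h (below ord V m ∪ A)) +
          ∑ i ∈ V.erase m, (h (insert i (below ord V i ∪ A)) - h (below ord V i ∪ A)) :=
        (Finset.add_sum_erase V _ hm).symm
      have hih := ih (V.erase m) (Finset.erase_ssubset hm) A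
      have hsum2 : ∑ i ∈ V.erase m,
          (h (insert i (below ord (V.erase m) i ∪ A)) - h (below ord (V.erase m) i ∪ A)) =
          ∑ i ∈ V.erase m, (h (insert i (below ord V i ∪ A)) - h (below ord V i ∪ A)) :=
        Finset.sum_congr rfl fun i hi => by rw [hbelow i hi]
      rw [hsum2] at hih
      have hins : insert m (V.erase m ∪ A) = V ∪ A := by
        rw [← Finset.insert_union, Finset.insert_erase hm]
      rw [hsum, hbm, hins] at *
      linarith [hih]
end Comb

section Shearer
variable {ι : Type*} [DecidableEq ι] (h : Finset ι → ℝ) (ord : ι → ℕ)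

lemma shearer_frac (hmono : ∀ {B C : Finset ι}, B ⊆ C → h B ≤ h C)
    (hsub : ∀ P Q, h (P ∪ Q) + h (P ∩ Q) ≤ h P + h Q)
    (hord : Function.Injective ord)
    (U A : Finset ι) (𝒱 : Finset (Finset ι)) (g : Finset ι → ℝ)
    (hVsub : ∀ V ∈ 𝒱, V ⊆ U) (hg : ∀ V ∈ 𝒱, 0 ≤ g V)
    (hcov : ∀ i ∈ U, 1 ≤ ∑ V ∈ 𝒱.filter (fun V => i ∈ V), g V) :
    h (U ∪ A) - h A ≤ ∑ V ∈ 𝒱, g V * (h (V ∪ A) - h A) := by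
  classical
  set d : ι → ℝ := fun i => h (insert i (below ord U i ∪ A)) - h (below ord U i ∪ A) with hd
  have hd0 : ∀ i, 0 ≤ d i := fun i => by
    simp only [hd, sub_nonneg]
    exact hmono (Finset.subset_insert _ _)
  have hterm : ∀ V ∈ 𝒱, ∀ i ∈ V,
      d i ≤ h (insert i (below ord V i ∪ A)) - h (below ord V i ∪ A) := by
    intro V hV i hi
    by_cases hiA : i ∈ A
    · have e1 : insert i (below ord U i ∪ A) = below ord U i ∪ A :=
        Finset.insert_eq_self.mpr (Finset.mem_union_right _ hiA)
      have e2 : insert i (below ord V i ∪ A) = below ord V i ∪ A :=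
        Finset.insert_eq_self.mpr (Finset.mem_union_right _ hiA)
      simp [hd, e1, e2]
    · refine antitone_diff h hsub ?_ ?_
      · exact Finset.union_subset_union_left
          (Finset.filter_subset_filter _ (hVsub V hV))
      · simp only [Finset.mem_union, below, Finset.mem_filter]
        rintro (⟨_, h1⟩ | h1)
        · exact absurd h1 (lt_irrefl _)
        · exact hiA h1
  calc h (U ∪ A) - h A = ∑ i ∈ U, d i := chain_rule h ord hord U A
    _ ≤ ∑ i ∈ U, (∑ V ∈ 𝒱.filter (fun V => i ∈ V), g V) * d i := by
        refine Finset.sum_le_sum fun i hi => ?_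
        exact le_mul_of_one_le_left (hd0 i) (hcov i hi)
    _ = ∑ i ∈ U, ∑ V ∈ 𝒱.filter (fun V => i ∈ V), g V * d i := by
        refine Finset.sum_congr rfl fun i _ => ?_
        rw [Finset.sum_mul]
    _ = ∑ V ∈ 𝒱, ∑ i ∈ V, g V * d i := by
        simp only [Finset.sum_filter]
        rw [Finset.sum_comm]
        refine Finset.sum_congr rfl fun V hV => ?_
        rw [← Finset.sum_filter]
        have : U.filter (fun i => i ∈ V) = V := by
          ext i
          simp only [Finset.mem_filter]
          exact ⟨fun ⟨_, h2⟩ => h2, fun h2 => ⟨hVsub V hV h2, h2⟩⟩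
        rw [this]
    _ ≤ ∑ V ∈ 𝒱, ∑ i ∈ V, g V *
        (h (insert i (below ord V i ∪ A)) - h (below ord V i ∪ A)) := by
        refine Finset.sum_le_sum fun V hV => Finset.sum_le_sum fun i hi => ?_
        exact mul_le_mul_of_nonneg_left (hterm V hV i hi) (hg V hV)
    _ = ∑ V ∈ 𝒱, g V * (h (V ∪ A) - h A) := by
        refine Finset.sum_congr rfl fun V hV => ?_
        rw [chain_rule h ord hord V A, Finset.mul_sum]

end Shearer

/-- **Conditional chain form of the Madiman–Tetali inequality** (Proposition 1).
The families `𝒜_U` are given on the top level `Σ^{(M)}` and propagated downwards by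
`𝒜_V = ⋃_{U ∈ 𝒰_V} 𝒜_U` (hypothesis `hA`). -/
theorem madiman_tetali_conditional_chain
    {Ω : Type*} [MeasurableSpace Ω] (μ : Measure Ω) [IsProbabilityMeasure μ]
    {ι : Type*} [Fintype ι] [DecidableEq ι]
    {S : ι → Type*} [∀ i, Fintype (S i)] [∀ i, MeasurableSpace (S i)]
    [∀ i, MeasurableSingletonClass (S i)]
    (X : ∀ i, Ω → S i) (hX : ∀ i, Measurable (X i))
    (M : ℕ) (hM : 1 ≤ M) (Sig : ℕ → Finset (Finset ι))
    (hdisj : ∀ a ∈ Finset.Icc 1 M, ∀ b ∈ Finset.Icc 1 M, a ≠ b → Disjoint (Sig a) (Sig b))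
    (𝒜 : Finset ι → Finset (Finset ι))
    (hA : ∀ β ∈ Finset.Icc 1 (M - 1), ∀ V ∈ Sig β,
      𝒜 V = ((Sig (β + 1)).filter (fun U => V ⊆ U)).biUnion 𝒜)
    (s : Finset ι → Finset ι → ℝ)
    (hs0 : ∀ β ∈ Finset.Icc 1 M, ∀ U ∈ Sig β, ∀ A ∈ 𝒜 U, 0 ≤ s U A)
    (α : ℕ) (hα1 : 2 ≤ α) (hα2 : α ≤ M)
    (g : Finset ι → Finset ι → ℝ)
    (hg0 : ∀ U ∈ Sig α, ∀ V ∈ (Sig (α - 1)).filter (fun V => V ⊆ U), 0 ≤ g U V)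
    (hgcov : ∀ U ∈ Sig α, ∀ i ∈ U,
      1 ≤ ∑ V ∈ (Sig (α - 1)).filter (fun V => V ⊆ U ∧ i ∈ V), g U V)
    (hs : ∀ V ∈ Sig (α - 1), ∀ A ∈ 𝒜 V,
      s V A = ∑ U ∈ (Sig α).filter (fun U => V ⊆ U ∧ A ∈ 𝒜 U), g U V * s U A) :
    ∑ V ∈ Sig (α - 1), ∑ A ∈ 𝒜 V, s V A * condEntHset μ X V A ≥
      ∑ U ∈ Sig α, ∑ A ∈ 𝒜 U, s U A * condEntHset μ X U A := by
  classical
  have hord : Function.Injective (fun i : ι => ((Fintype.equivFin ι) i : ℕ)) := fun a b e =>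
    (Fintype.equivFin ι).injective (Fin.val_injective e)
  have hmono : ∀ B C : Finset ι, B ⊆ C → entHset μ X B ≤ entHset μ X C :=
    fun B C hBC => entHset_mono μ X hX hBC
  have hsub : ∀ P Q : Finset ι,
      entHset μ X (P ∪ Q) + entHset μ X (P ∩ Q) ≤ entHset μ X P + entHset μ X Q :=
    fun P Q => entHset_submod μ X hX P Q
  have hCE : ∀ V A : Finset ι,
      condEntHset μ X V A = entHset μ X (V ∪ A) - entHset μ X A := by
    intro V A
    unfold condEntHset condEntH
    rw [entH_pair_jointOn μ X V A]
    rfl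
  have hAsub : ∀ V ∈ Sig (α - 1), ∀ U ∈ Sig α, V ⊆ U → 𝒜 U ⊆ 𝒜 V := by
    intro V hV U hU hVU
    have hβmem : α - 1 ∈ Finset.Icc 1 (M - 1) := Finset.mem_Icc.mpr ⟨by omega, by omega⟩
    have hAV := hA (α - 1) hβmem V hV
    have hsucc : α - 1 + 1 = α := by omega
    rw [hsucc] at hAV
    intro A' hA'
    rw [hAV]
    exact Finset.mem_biUnion.mpr ⟨U, Finset.mem_filter.mpr ⟨hU, hVU⟩, hA'⟩
  have hkey : ∀ U ∈ Sig α, ∀ A ∈ 𝒜 U, condEntHset μ X U A ≤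
      ∑ V ∈ (Sig (α - 1)).filter (fun V => V ⊆ U), g U V * condEntHset μ X V A := by
    intro U hU A hA'
    have hres := shearer_frac (entHset μ X) (fun i : ι => ((Fintype.equivFin ι) i : ℕ))
      (fun {B C} hBC => hmono B C hBC) hsub hord U A
      ((Sig (α - 1)).filter (fun V => V ⊆ U)) (g U)
      (fun V hV => (Finset.mem_filter.mp hV).2) (hg0 U hU)
      (by
        intro i hi
        rw [Finset.filter_filter]
        exact hgcov U hU i hi)
    rw [hCE U A]
    calc entHset μ X (U ∪ A) - entHset μ X A
        ≤ ∑ V ∈ (Sig (α - 1)).filter (fun V => V ⊆ U),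
            g U V * (entHset μ X (V ∪ A) - entHset μ X A) := hres
      _ = ∑ V ∈ (Sig (α - 1)).filter (fun V => V ⊆ U), g U V * condEntHset μ X V A :=
          Finset.sum_congr rfl fun V _ => by rw [hCE]
  rw [ge_iff_le]
  calc ∑ U ∈ Sig α, ∑ A ∈ 𝒜 U, s U A * condEntHset μ X U A
      ≤ ∑ U ∈ Sig α, ∑ A ∈ 𝒜 U, s U A *
          ∑ V ∈ (Sig (α - 1)).filter (fun V => V ⊆ U), g U V * condEntHset μ X V A := by
        refine Finset.sum_le_sum fun U hU => Finset.sum_le_sum fun A hA' => ?_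
        exact mul_le_mul_of_nonneg_left (hkey U hU A hA')
          (hs0 α (Finset.mem_Icc.mpr ⟨by omega, hα2⟩) U hU A hA')
    _ = ∑ U ∈ Sig α, ∑ A ∈ 𝒜 U, ∑ V ∈ (Sig (α - 1)).filter (fun V => V ⊆ U),
          g U V * s U A * condEntHset μ X V A := by
        refine Finset.sum_congr rfl fun U _ => Finset.sum_congr rfl fun A _ => ?_
        rw [Finset.mul_sum]
        exact Finset.sum_congr rfl fun V _ => by ring
    _ = ∑ U ∈ Sig α, ∑ V ∈ (Sig (α - 1)).filter (fun V => V ⊆ U), ∑ A ∈ 𝒜 U,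
          g U V * s U A * condEntHset μ X V A :=
        Finset.sum_congr rfl fun U _ => Finset.sum_comm
    _ = ∑ U ∈ Sig α, ∑ V ∈ Sig (α - 1), ∑ A ∈ 𝒜 V,
          (if V ⊆ U ∧ A ∈ 𝒜 U then g U V * s U A * condEntHset μ X V A else 0) := by
        refine Finset.sum_congr rfl fun U hU => ?_
        rw [Finset.sum_filter]
        refine Finset.sum_congr rfl fun V hV => ?_
        by_cases hVU : V ⊆ U
        · simp only [hVU, if_true, true_and]
          rw [← Finset.sum_filter]
          have hfe : (𝒜 V).filter (fun A => A ∈ 𝒜 U) = 𝒜 U := by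
            ext A
            simp only [Finset.mem_filter]
            exact ⟨fun hp => hp.2, fun hp => ⟨hAsub V hV U hU hVU hp, hp⟩⟩
          rw [hfe]
        · simp [hVU]
    _ = ∑ V ∈ Sig (α - 1), ∑ A ∈ 𝒜 V, ∑ U ∈ Sig α,
          (if V ⊆ U ∧ A ∈ 𝒜 U then g U V * s U A * condEntHset μ X V A else 0) := by
        rw [Finset.sum_comm]
        exact Finset.sum_congr rfl fun V _ => Finset.sum_comm
    _ = ∑ V ∈ Sig (α - 1), ∑ A ∈ 𝒜 V, s V A * condEntHset μ X V A := by
        refine Finset.sum_congr rfl fun V hV => Finset.sum_congr rfl fun A hA' => ?_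
        rw [hs V hV A hA', Finset.sum_mul, Finset.sum_filter]
end
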